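/- arXiv:math/0612072 — 5 statements merged into one kernel-verified Lean document; each statement's English description precedes it below -/
import Mathlib

section
/- Suppose B is connected, meaning that for every b ∈ B and k ∈ ℕ, if b(b−1)(b−2)⋯(b−k) = 0 in B then b = j·1_B for some natural number j ≤ k, and suppose B is nontrivial. Let f : A → B be a ℚ-linear map such that for some N ∈ ℕ one has ψ_k(f,a) = 0 for all k > N and all a ∈ A. Then there exists a natural number n ≤ N such that f(1) = n·1_B, ψ_k(f,a) = 0 for all k > n and all a ∈ A, and ψ_n(f,1) = 1; i.e., R(f,a) is a polynomial in T of degree at most n for every a and of degree exactly n for a = 1. -/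
open PowerSeries

noncomputable def logOneAdd {A : Type*} [CommRing A] [Algebra ℚ A] (a : A) : PowerSeries A :=
  PowerSeries.mk fun k => ((-1 : ℚ) ^ (k + 1) / k) • a ^ k

noncomputable def mapCoeff {A B : Type*} [CommRing A] [CommRing B] [Algebra ℚ A] [Algebra ℚ B]
    (f : A →ₗ[ℚ] B) (p : PowerSeries A) : PowerSeries B :=
  PowerSeries.mk fun k => f (PowerSeries.coeff k p)

noncomputable def expPS {B : Type*} [CommRing B] [Algebra ℚ B] (p : PowerSeries B) : PowerSeries B :=
  PowerSeries.mk fun k => ∑ m ∈ Finset.range (k + 1),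
    ((m.factorial : ℚ)⁻¹) • PowerSeries.coeff k (p ^ m)

noncomputable def charFun {A B : Type*} [CommRing A] [CommRing B] [Algebra ℚ A] [Algebra ℚ B]
    (f : A →ₗ[ℚ] B) (a : A) : PowerSeries B :=
  expPS (mapCoeff f (logOneAdd a))

noncomputable def psi {A B : Type*} [CommRing A] [CommRing B] [Algebra ℚ A] [Algebra ℚ B]
    (f : A →ₗ[ℚ] B) (a : A) (k : ℕ) : B :=
  PowerSeries.coeff k (charFun f a)

def IsNHom {A B : Type*} [CommRing A] [CommRing B] [Algebra ℚ A] [Algebra ℚ B]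
    (f : A →ₗ[ℚ] B) (n : ℕ) : Prop :=
  f 1 = n • (1 : B) ∧ ∀ k, n + 1 ≤ k → ∀ a : A, psi f a k = 0

noncomputable def frob {A B : Type*} [CommRing A] [CommRing B] [Algebra ℚ A] [Algebra ℚ B]
    (f : A →ₗ[ℚ] B) : (k : ℕ) → (Fin k → A) → B
  | 0, _ => 1
  | k + 1, a =>
      f (a (Fin.last k)) * frob f k (fun i => a i.castSucc)
        - ∑ i : Fin k, frob f k
            (Function.update (fun j : Fin k => a j.castSucc) i (a i.castSucc * a (Fin.last k)))

/- ======================  auxiliary development  ====================== -/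

set_option linter.unusedSectionVars false
set_option maxHeartbeats 2000000

namespace Stmt4Aux

open Finset

section GeneralRing

variable {R : Type*} [CommRing R] [Algebra ℚ R]

lemma coeff_pow_eq_zero {p : R⟦X⟧} (hp : constantCoeff p = 0) {m j : ℕ} (h : j < m) :
    coeff j (p ^ m) = 0 := by
  obtain ⟨q, hq⟩ := pow_dvd_pow_of_dvd (X_dvd_iff.mpr hp) m
  rw [hq, coeff_mul]
  refine Finset.sum_eq_zero fun x hx => ?_
  have := Finset.HasAntidiagonal.antidiagonal.fst_le hx
  rw [coeff_X_pow, if_neg (by omega), zero_mul]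

lemma natCast_isUnit (k : ℕ) : IsUnit ((k+1 : ℕ) : R) := by
  have : ((k+1 : ℕ) : R) = algebraMap ℚ R ((k+1 : ℕ) : ℚ) := by
    rw [map_natCast]
  rw [this]
  exact (IsUnit.map _ (isUnit_iff_ne_zero.mpr (by exact_mod_cast Nat.succ_ne_zero k)))

lemma ode_unique {p q h : R⟦X⟧} (hp : d⁄dX R p = h * p) (hq : d⁄dX R q = h * q)
    (h0 : constantCoeff p = constantCoeff q) : p = q := by
  ext k
  induction k using Nat.strong_induction_on with
  | _ k ih =>
    match k with
    | 0 => simpa using h0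
    | k+1 =>
      have e1 : coeff k (d⁄dX R p) = coeff k (d⁄dX R q) := by
        rw [hp, hq, coeff_mul, coeff_mul]
        refine Finset.sum_congr rfl fun x hx => ?_
        have hx2 : x.2 < k + 1 := Nat.lt_succ_of_le (Finset.HasAntidiagonal.antidiagonal.snd_le hx)
        rw [ih x.2 hx2]
      rw [coeff_derivative, coeff_derivative] at e1
      have hu := natCast_isUnit (R := R) k
      push_cast at e1 hu ⊢
      exact hu.mul_left_cancel (by linear_combination e1)

/- ---- expPS ---- -/

lemma coeff_expPS {p : R⟦X⟧} (hp : constantCoeff p = 0) {k M : ℕ} (hM : k + 1 ≤ M) :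
    coeff k (expPS p) = ∑ m ∈ Finset.range M, ((m.factorial : ℚ)⁻¹) • coeff k (p ^ m) := by
  rw [expPS, coeff_mk]
  refine Finset.sum_subset (Finset.range_subset_range.mpr hM) fun m hm hm' => ?_
  rw [coeff_pow_eq_zero hp (by simp at hm hm' ⊢; omega), smul_zero]

lemma constantCoeff_expPS (p : R⟦X⟧) : constantCoeff (expPS p) = 1 := by
  have : constantCoeff (expPS p) = coeff 0 (expPS p) := by simp
  rw [this, expPS, coeff_mk]
  simp

lemma deriv_expPS {p : R⟦X⟧} (hp : constantCoeff p = 0) :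
    d⁄dX R (expPS p) = (d⁄dX R p) * expPS p := by
  ext k
  have lhs : coeff k (d⁄dX R (expPS p))
      = ∑ m ∈ Finset.range (k + 1), ((m.factorial : ℚ)⁻¹) • coeff k (p ^ m * d⁄dX R p) := by
    rw [coeff_derivative, coeff_expPS hp (le_refl (k+2)), Finset.sum_mul]
    rw [Finset.sum_range_succ']
    have h0 : ((Nat.factorial 0 : ℚ)⁻¹) • coeff (k+1) (p ^ 0) * ((k:R) + 1) = 0 := by
      simp [coeff_one]
    rw [h0, add_zero]
    refine Finset.sum_congr rfl fun i _ => ?_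
    have hd : d⁄dX R (p ^ (i + 1)) = (i+1) • (p ^ i * d⁄dX R p) := by
      rw [Derivation.leibniz_pow]
      simp [smul_eq_mul]
    have hc : coeff (k+1) (p ^ (i+1)) * ((k:R) + 1) = coeff k (d⁄dX R (p ^ (i+1))) := by
      rw [coeff_derivative]
    rw [smul_mul_assoc, hc, hd, map_nsmul]
    rw [← Nat.cast_smul_eq_nsmul ℚ, smul_smul]
    congr 1
    rw [Nat.factorial_succ]
    push_cast
    rw [mul_inv]
    field_simp
  rw [lhs, coeff_mul]
  have rhs : ∀ x ∈ antidiagonal k, coeff x.1 (d⁄dX R p) * coeff x.2 (expPS p)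
      = ∑ m ∈ Finset.range (k + 1), ((m.factorial : ℚ)⁻¹) •
          (coeff x.1 (d⁄dX R p) * coeff x.2 (p ^ m)) := by
    intro x hx
    rw [coeff_expPS hp (Nat.succ_le_succ (Finset.HasAntidiagonal.antidiagonal.snd_le hx)), Finset.mul_sum]
    refine Finset.sum_congr rfl fun m _ => ?_
    rw [mul_smul_comm]
  rw [Finset.sum_congr rfl rhs, Finset.sum_comm]
  refine Finset.sum_congr rfl fun m _ => ?_
  rw [← Finset.smul_sum, ← coeff_mul, mul_comm (p ^ m)]

/- ---- compS : substitution of a rational power series ---- -/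

noncomputable def compS (S : PowerSeries ℚ) (F : R⟦X⟧) : R⟦X⟧ :=
  PowerSeries.mk fun j => ∑ k ∈ Finset.range (j + 1), (coeff j (S ^ k)) • coeff k F

noncomputable abbrev rho : PowerSeries ℚ →+* R⟦X⟧ := PowerSeries.map (algebraMap ℚ R)

lemma smul_mul_algebraMap (v : R) (c d : ℚ) : (c • v) * algebraMap ℚ R d = (c * d) • v := by
  rw [Algebra.smul_def, Algebra.smul_def, map_mul]; ring

lemma smul_mul_natCast (v : R) (c : ℚ) (j : ℕ) : (c • v) * ((j : R) + 1) = (c * ((j:ℚ)+1)) • v := by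
  have : ((j : R) + 1) = algebraMap ℚ R ((j:ℚ)+1) := by push_cast; simp
  rw [this, smul_mul_algebraMap]

lemma deriv_rho (q : PowerSeries ℚ) : d⁄dX R (rho q) = rho (d⁄dX ℚ q) := by
  ext k
  rw [coeff_derivative, coeff_map, coeff_map, coeff_derivative, map_mul]
  push_cast
  simp

variable {S : PowerSeries ℚ} (hS : constantCoeff S = 0)

include hS in
lemma coeff_compS (F : R⟦X⟧) {j M : ℕ} (hM : j + 1 ≤ M) :
    coeff j (compS S F) = ∑ k ∈ Finset.range M, (coeff j (S ^ k)) • coeff k F := by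
  rw [compS, coeff_mk]
  refine Finset.sum_subset (Finset.range_subset_range.mpr hM) fun m hm hm' => ?_
  rw [coeff_pow_eq_zero hS (by simp at hm hm' ⊢; omega), zero_smul]

lemma compS_add (F G : R⟦X⟧) : compS S (F + G) = compS S F + compS S G := by
  ext j
  simp [compS, smul_add, Finset.sum_add_distrib]

lemma compS_C (r : R) : compS S (C r) = C r := by
  ext j
  rw [compS, coeff_mk]
  rw [Finset.sum_eq_single 0 (fun m _ hm => by
    rw [coeff_C, if_neg hm, smul_zero]) (by simp)]
  simp [coeff_C]

lemma constantCoeff_compS (F : R⟦X⟧) : constantCoeff (compS S F) = constantCoeff F := by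
  have : constantCoeff (compS S F) = coeff 0 (compS S F) := by simp
  rw [this, compS, coeff_mk]
  simp

include hS in
lemma compS_C_mul_X (r : R) : compS S (C r * X) = C r * rho S := by
  ext j
  rw [compS, coeff_mk]
  have hco : ∀ k, coeff k (C r * X) = if k = 1 then r else 0 := by
    intro k
    rw [coeff_C_mul, coeff_X]
    split <;> simp [*]
  have : ∀ k ∈ Finset.range (j+1), (coeff j (S ^ k)) • coeff k (C r * X)
      = if k = 1 then (coeff j S) • r else 0 := by
    intro k _
    rw [hco]
    split <;> simp [*]
  rw [Finset.sum_congr rfl this, Finset.sum_ite_eq' (Finset.range (j+1)) 1]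
  rw [coeff_C_mul, coeff_map]
  rw [Algebra.smul_def, mul_comm]
  split
  · rfl
  · rename_i hj
    have hj0 : j = 0 := by simp at hj; omega
    subst hj0
    have : coeff 0 S = 0 := by rw [← coeff_zero_eq_constantCoeff] at hS; exact hS
    rw [this]
    simp

include hS in
lemma compS_mul (F G : R⟦X⟧) : compS S (F * G) = compS S F * compS S G := by
  ext j
  have lhs : coeff j (compS S (F * G))
      = ∑ k ∈ Finset.range (j+1), ∑ x ∈ antidiagonal k,
          (coeff j (S ^ (x.1 + x.2))) • (coeff x.1 F * coeff x.2 G) := by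
    rw [compS, coeff_mk]
    refine Finset.sum_congr rfl fun k _ => ?_
    rw [coeff_mul, Finset.smul_sum]
    refine Finset.sum_congr rfl fun x hx => ?_
    rw [Finset.HasAntidiagonal.mem_antidiagonal.mp hx]
  have key : ∑ k ∈ Finset.range (j+1), ∑ x ∈ antidiagonal k,
        (coeff j (S ^ (x.1 + x.2))) • (coeff x.1 F * coeff x.2 G)
      = ∑ x ∈ (Finset.range (j+1)) ×ˢ (Finset.range (j+1)),
          (coeff j (S ^ (x.1 + x.2))) • (coeff x.1 F * coeff x.2 G) := by
    rw [← Finset.sum_biUnion]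
    · refine Finset.sum_subset ?_ ?_
      · intro x hx
        simp only [Finset.mem_biUnion, Finset.mem_range] at hx
        obtain ⟨k, hk, hx⟩ := hx
        rw [Finset.HasAntidiagonal.mem_antidiagonal] at hx
        simp only [Finset.mem_product, Finset.mem_range]
        omega
      · intro x hx hx'
        simp only [Finset.mem_biUnion, Finset.mem_range, Finset.HasAntidiagonal.mem_antidiagonal] at hx'
        have : j < x.1 + x.2 := by
          by_contra hc
          exact hx' ⟨x.1 + x.2, by omega, rfl⟩
        rw [coeff_pow_eq_zero hS this, zero_smul]
    · intro u hu v hv huv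
      simp only [Finset.disjoint_left, Finset.HasAntidiagonal.mem_antidiagonal]
      intro x h1 h2
      exact huv (h1 ▸ h2 ▸ rfl)
  have rhs : coeff j (compS S F * compS S G)
      = ∑ x ∈ (Finset.range (j+1)) ×ˢ (Finset.range (j+1)),
          (coeff j (S ^ (x.1 + x.2))) • (coeff x.1 F * coeff x.2 G) := by
    rw [coeff_mul]
    have e1 : ∀ y ∈ antidiagonal j, coeff y.1 (compS S F) * coeff y.2 (compS S G)
        = ∑ p ∈ Finset.range (j+1), ∑ q ∈ Finset.range (j+1),
            (coeff y.1 (S ^ p) * coeff y.2 (S ^ q)) • (coeff p F * coeff q G) := by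
      intro y hy
      rw [coeff_compS hS F (M := j+1) (Nat.succ_le_succ (Finset.HasAntidiagonal.antidiagonal.fst_le hy)),
          coeff_compS hS G (M := j+1) (Nat.succ_le_succ (Finset.HasAntidiagonal.antidiagonal.snd_le hy)),
          Finset.sum_mul]
      refine Finset.sum_congr rfl fun p _ => ?_
      rw [Finset.mul_sum]
      refine Finset.sum_congr rfl fun q _ => ?_
      rw [smul_mul_assoc, mul_smul_comm, smul_smul]
    rw [Finset.sum_congr rfl e1, Finset.sum_comm]
    rw [Finset.sum_product]
    refine Finset.sum_congr rfl fun p _ => ?_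
    rw [Finset.sum_comm]
    refine Finset.sum_congr rfl fun q _ => ?_
    rw [← Finset.sum_smul]
    congr 1
    rw [pow_add, coeff_mul]
  rw [lhs, key, rhs]

include hS in
lemma deriv_compS (F : R⟦X⟧) :
    d⁄dX R (compS S F) = compS S (d⁄dX R F) * rho (d⁄dX ℚ S) := by
  ext j
  have lhs : coeff j (d⁄dX R (compS S F))
      = ∑ k ∈ Finset.range (j+1), ((k+1 : ℚ) * coeff j (S ^ k * d⁄dX ℚ S)) • coeff (k+1) F := by
    rw [coeff_derivative, coeff_compS hS F (le_refl (j+2)), Finset.sum_mul,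
      Finset.sum_range_succ']
    have h0 : (coeff (j+1) (S ^ 0)) • coeff 0 F * ((j:R)+1) = 0 := by
      simp [coeff_one]
    rw [h0, add_zero]
    refine Finset.sum_congr rfl fun k _ => ?_
    rw [smul_mul_natCast]
    congr 1
    have hd : d⁄dX ℚ (S ^ (k + 1)) = (k+1) • (S ^ k * d⁄dX ℚ S) := by
      rw [Derivation.leibniz_pow]; simp [smul_eq_mul]
    have hc : coeff (j+1) (S ^ (k+1)) * ((j:ℚ) + 1) = coeff j (d⁄dX ℚ (S ^ (k+1))) := by
      rw [coeff_derivative]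
    rw [hc, hd, map_nsmul, nsmul_eq_mul]
    push_cast
    ring
  have rhs : coeff j (compS S (d⁄dX R F) * rho (d⁄dX ℚ S))
      = ∑ k ∈ Finset.range (j+1), ((k+1 : ℚ) * coeff j (S ^ k * d⁄dX ℚ S)) • coeff (k+1) F := by
    rw [coeff_mul]
    have e1 : ∀ y ∈ antidiagonal j, coeff y.1 (compS S (d⁄dX R F)) * coeff y.2 (rho (d⁄dX ℚ S))
        = ∑ k ∈ Finset.range (j+1),
            ((k+1:ℚ) * (coeff y.1 (S ^ k) * coeff y.2 (d⁄dX ℚ S))) • coeff (k+1) F := by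
      intro y hy
      rw [coeff_compS hS _ (M := j+1) (Nat.succ_le_succ (Finset.HasAntidiagonal.antidiagonal.fst_le hy)),
        Finset.sum_mul]
      refine Finset.sum_congr rfl fun k _ => ?_
      have hdf : coeff k (d⁄dX R F) = coeff (k+1) F * ((k:R)+1) := coeff_derivative F k
      rw [coeff_map, smul_mul_algebraMap, hdf, ← smul_mul_assoc, smul_mul_natCast]
      congr 1
      ring
    rw [Finset.sum_congr rfl e1, Finset.sum_comm]
    refine Finset.sum_congr rfl fun k _ => ?_
    rw [← Finset.sum_smul]
    congr 1
    rw [coeff_mul, Finset.mul_sum]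
  rw [lhs, rhs]

include hS in
lemma coeff_rho_mul_compS (q : PowerSeries ℚ) (F : R⟦X⟧) (j : ℕ) :
    coeff j (rho q * compS S F)
      = ∑ k ∈ Finset.range (j+1), (coeff j (q * S ^ k)) • coeff k F := by
  rw [coeff_mul]
  have e1 : ∀ y ∈ antidiagonal j, coeff y.1 (rho q) * coeff y.2 (compS S F)
      = ∑ k ∈ Finset.range (j+1), (coeff y.1 q * coeff y.2 (S ^ k)) • coeff k F := by
    intro y hy
    rw [coeff_compS hS _ (M := j+1) (Nat.succ_le_succ (Finset.HasAntidiagonal.antidiagonal.snd_le hy)),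
      coeff_map, Finset.mul_sum]
    refine Finset.sum_congr rfl fun k _ => ?_
    rw [mul_comm (algebraMap ℚ R _), smul_mul_algebraMap]
    congr 1
    ring
  rw [Finset.sum_congr rfl e1, Finset.sum_comm]
  refine Finset.sum_congr rfl fun k _ => ?_
  rw [← Finset.sum_smul]
  congr 1
  rw [coeff_mul]

/- ---- explicit series over a general ring ---- -/

noncomputable def oneAddInv (c : R) : R⟦X⟧ := PowerSeries.mk fun k => (-c) ^ k

lemma coeff_X_mul' (q : R⟦X⟧) (i : ℕ) :
    coeff i (X * q) = if i = 0 then 0 else coeff (i-1) q := by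
  cases i with
  | zero => simp [coeff_zero_eq_constantCoeff]
  | succ i => rw [coeff_succ_X_mul]; simp

lemma one_add_mul_oneAddInv (c : R) : (1 + C c * X) * oneAddInv c = 1 := by
  ext k
  rw [add_mul, one_mul, map_add]
  cases k with
  | zero => simp [oneAddInv, coeff_zero_eq_constantCoeff]
  | succ k =>
    rw [mul_comm (C c) X, mul_assoc, coeff_succ_X_mul, coeff_C_mul]
    simp [oneAddInv, coeff_one, pow_succ]
    ring

noncomputable def geomS (c : R) : R⟦X⟧ := PowerSeries.mk fun k => (-1 : R) ^ k * c ^ (k+1)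

lemma geomS_eq (c : R) : geomS c = C c * oneAddInv c := by
  ext k
  rw [geomS, coeff_mk, coeff_C_mul, oneAddInv, coeff_mk, neg_pow, pow_succ]
  ring

lemma one_add_mul_geomS (c : R) : (1 + C c * X) * geomS c = C c := by
  rw [geomS_eq]
  calc (1 + C c * X) * (C c * oneAddInv c)
      = C c * ((1 + C c * X) * oneAddInv c) := by ring
    _ = C c := by rw [one_add_mul_oneAddInv, mul_one]

end GeneralRing

/- ---- rational-coefficient series : u = 1 + tX and friends ---- -/

section Rational

variable (t : ℚ)

noncomputable def uu : PowerSeries ℚ := 1 + C t * X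

lemma uu_mul_oneAddInv : uu t * oneAddInv t = 1 := one_add_mul_oneAddInv t

lemma coeff_uu_pow (r i : ℕ) : coeff i ((uu t) ^ r) = t ^ i * (r.choose i) := by
  induction r generalizing i with
  | zero => cases i <;> simp [coeff_one]
  | succ r ih =>
    have expand : (uu t) ^ (r+1) = (uu t)^r + C t * (X * (uu t)^r) := by
      rw [pow_succ, uu]; ring
    rw [expand, map_add, coeff_C_mul, coeff_X_mul', ih]
    cases i with
    | zero => simp
    | succ i =>
      rw [if_neg (Nat.succ_ne_zero i)]
      simp only [Nat.add_sub_cancel, ih]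
      rw [Nat.choose_succ_succ]
      push_cast
      ring

noncomputable def binv (r : ℕ) : PowerSeries ℚ := PowerSeries.mk fun j => (-t) ^ j * ((r+j).choose j)

lemma binv_zero : binv t 0 = oneAddInv t := by
  ext j
  simp [binv, oneAddInv]

lemma uu_mul_binv_succ (r : ℕ) : uu t * binv t (r+1) = binv t r := by
  ext k
  have expand : uu t * binv t (r+1) = binv t (r+1) + C t * (X * binv t (r+1)) := by
    rw [uu]; ring
  rw [expand, map_add, coeff_C_mul, coeff_X_mul']
  cases k with
  | zero => simp [binv]
  | succ k =>
    rw [if_neg (Nat.succ_ne_zero k)]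
    simp only [Nat.add_sub_cancel, binv, coeff_mk]
    rw [show r + 1 + (k+1) = (r+1+k)+1 from by omega, Nat.choose_succ_succ']
    have hrk : r + (k+1) = r + 1 + k := by omega
    rw [hrk]
    push_cast
    ring

lemma uu_pow_mul_binv (r : ℕ) : (uu t) ^ (r+1) * binv t r = 1 := by
  induction r with
  | zero => rw [pow_one, binv_zero]; exact uu_mul_oneAddInv t
  | succ r ih =>
    calc (uu t)^(r+2) * binv t (r+1) = (uu t)^(r+1) * (uu t * binv t (r+1)) := by ring
      _ = (uu t)^(r+1) * binv t r := by rw [uu_mul_binv_succ]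
      _ = 1 := ih

lemma oneAddInv_pow_eq_binv (r : ℕ) : (oneAddInv t) ^ (r+1) = binv t r := by
  have h1 : (uu t)^(r+1) * (oneAddInv t)^(r+1) = 1 := by
    rw [← mul_pow, uu_mul_oneAddInv, one_pow]
  calc (oneAddInv t)^(r+1) = (oneAddInv t)^(r+1) * ((uu t)^(r+1) * binv t r) := by
        rw [uu_pow_mul_binv, mul_one]
    _ = ((uu t)^(r+1) * (oneAddInv t)^(r+1)) * binv t r := by ring
    _ = binv t r := by rw [h1, one_mul]

noncomputable def sS : PowerSeries ℚ := X * oneAddInv t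

lemma constantCoeff_sS : constantCoeff (sS t) = 0 := by
  rw [sS, ← coeff_zero_eq_constantCoeff]
  rw [coeff_X_mul']
  simp

lemma coeff_uu_pow_mul_sS_pow (n k m : ℕ) (hnm : n < m) (hkm : k ≤ m) :
    coeff m ((uu t)^n * (sS t)^k)
      = ((-t) ^ (m-k) * ((m - n - 1).choose (m-k))) := by
  have hsplit : (uu t)^n * (sS t)^k = X^k * ((uu t)^n * (oneAddInv t)^k) := by
    rw [sS, mul_pow]; ring
  have hXk : ∀ q : PowerSeries ℚ, coeff m (X^k * q) = coeff (m-k) q := by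
    intro q
    rw [coeff_X_pow_mul', if_pos hkm]
  rcases le_or_gt k n with hkn | hnk
  · have hu : (uu t)^n * (oneAddInv t)^k = (uu t)^(n-k) := by
      have hsp : (uu t)^n = (uu t)^(n-k) * (uu t)^k := by
        rw [← pow_add]; congr 1; omega
      rw [hsp, mul_assoc, ← mul_pow, uu_mul_oneAddInv, one_pow, mul_one]
    rw [hsplit, hXk, hu, coeff_uu_pow]
    have h1 : (n - k).choose (m - k) = 0 := Nat.choose_eq_zero_of_lt (by omega)
    have h2 : (m - n - 1).choose (m - k) = 0 := Nat.choose_eq_zero_of_lt (by omega)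
    rw [h1, h2]
    simp
  · have hu : (uu t)^n * (oneAddInv t)^k = binv t (k-n-1) := by
      have hsp : (oneAddInv t)^k = (oneAddInv t)^n * (oneAddInv t)^(k-n) := by
        rw [← pow_add]; congr 1; omega
      calc (uu t)^n * (oneAddInv t)^k
          = ((uu t)^n * (oneAddInv t)^n) * (oneAddInv t)^(k-n) := by rw [hsp]; ring
        _ = (oneAddInv t)^(k-n) := by rw [← mul_pow, uu_mul_oneAddInv, one_pow, one_mul]
        _ = binv t (k-n-1) := by
            rw [show k - n = (k-n-1)+1 from by omega, oneAddInv_pow_eq_binv]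
            rw [Nat.add_sub_cancel]
    rw [hsplit, hXk, hu, binv, coeff_mk]
    have : k - n - 1 + (m - k) = m - n - 1 := by omega
    rw [this]

lemma deriv_uu : d⁄dX ℚ (uu t) = C t := by
  rw [uu]
  rw [map_add, Derivation.leibniz]
  simp

lemma deriv_sS : d⁄dX ℚ (sS t) = (oneAddInv t) * (oneAddInv t) := by
  have hdinv : d⁄dX ℚ (oneAddInv t) = - (C t * (oneAddInv t * oneAddInv t)) := by
    have h1 : d⁄dX ℚ (uu t * oneAddInv t) = 0 := by rw [uu_mul_oneAddInv]; simp
    rw [Derivation.leibniz, deriv_uu, smul_eq_mul, smul_eq_mul] at h1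
    have h3 : uu t * d⁄dX ℚ (oneAddInv t) = -(oneAddInv t * C t) := by
      linear_combination h1
    calc d⁄dX ℚ (oneAddInv t) = (uu t * oneAddInv t) * d⁄dX ℚ (oneAddInv t) := by
          rw [uu_mul_oneAddInv, one_mul]
      _ = oneAddInv t * (uu t * d⁄dX ℚ (oneAddInv t)) := by ring
      _ = oneAddInv t * (-(oneAddInv t * C t)) := by rw [h3]
      _ = - (C t * (oneAddInv t * oneAddInv t)) := by ring
  rw [sS, Derivation.leibniz, smul_eq_mul, smul_eq_mul, hdinv, derivative_X]
  have huv2 : oneAddInv t * oneAddInv t * (1 + C t * X) = oneAddInv t := by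
    calc oneAddInv t * oneAddInv t * (1 + C t * X)
        = oneAddInv t * ((1 + C t * X) * oneAddInv t) := by ring
      _ = oneAddInv t := by rw [show (1 + C t * X : PowerSeries ℚ) = uu t from rfl, uu_mul_oneAddInv t, mul_one]
  linear_combination -huv2

lemma deriv_uu_pow (n : ℕ) :
    d⁄dX ℚ ((uu t)^n) = n • (C t * oneAddInv t * (uu t)^n) := by
  cases n with
  | zero => simp
  | succ m =>
    rw [Derivation.leibniz_pow]
    have : (uu t)^(m+1-1) = (uu t)^m := by norm_num
    rw [this, deriv_uu]
    congr 1
    calc (uu t)^m • C t = C t * (uu t)^m := by rw [smul_eq_mul]; ring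
      _ = C t * oneAddInv t * (uu t)^(m+1) := by
          rw [pow_succ]
          calc C t * (uu t)^m = C t * (uu t)^m * (oneAddInv t * uu t) := by
                rw [mul_comm (oneAddInv t), uu_mul_oneAddInv, mul_one]
            _ = C t * oneAddInv t * ((uu t)^m * uu t) := by ring

end Rational

/- ---- mapCoeff lemmas ---- -/

section MapCoeff

variable {A B : Type*} [CommRing A] [CommRing B] [Algebra ℚ A] [Algebra ℚ B] (f : A →ₗ[ℚ] B)

@[simp] lemma coeff_mapCoeff (p : PowerSeries A) (k : ℕ) :
    coeff k (mapCoeff f p) = f (coeff k p) := by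
  rw [mapCoeff, coeff_mk]

lemma mapCoeff_one : mapCoeff f 1 = C (f 1) := by
  ext k
  rw [coeff_mapCoeff, coeff_one, coeff_C]
  split <;> simp [*]

lemma mapCoeff_add (p q : PowerSeries A) : mapCoeff f (p + q) = mapCoeff f p + mapCoeff f q := by
  ext k; simp

lemma constantCoeff_logOneAdd (a : A) : constantCoeff (logOneAdd a) = 0 := by
  rw [← coeff_zero_eq_constantCoeff, logOneAdd, coeff_mk]
  norm_num

lemma constantCoeff_mapCoeff_logOneAdd (a : A) :
    constantCoeff (mapCoeff f (logOneAdd a)) = 0 := by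
  rw [← coeff_zero_eq_constantCoeff, coeff_mapCoeff, coeff_zero_eq_constantCoeff,
    constantCoeff_logOneAdd, map_zero]

lemma deriv_logOneAdd (a : A) : d⁄dX A (logOneAdd a) = geomS a := by
  ext k
  rw [coeff_derivative, logOneAdd, coeff_mk, geomS, coeff_mk]
  have h1 : ((k:A) + 1) = algebraMap ℚ A ((k:ℚ)+1) := by push_cast; simp
  rw [h1, Algebra.smul_def]
  have h2 : ((-1 : ℚ) ^ (k + 1 + 1) / ((k+1 : ℕ) : ℚ)) * ((k:ℚ)+1) = (-1:ℚ)^k := by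
    push_cast
    have hne : ((k:ℚ)+1) ≠ 0 := by positivity
    field_simp
    ring
  calc algebraMap ℚ A ((-1)^(k+1+1) / ((k+1:ℕ):ℚ)) * a ^ (k+1) * algebraMap ℚ A ((k:ℚ)+1)
      = algebraMap ℚ A (((-1)^(k+1+1) / ((k+1:ℕ):ℚ)) * ((k:ℚ)+1)) * a ^ (k+1) := by
        rw [map_mul]; ring
    _ = (-1:A)^k * a^(k+1) := by
        rw [h2, map_pow, map_neg, map_one]

lemma deriv_mapCoeff (p : PowerSeries A) : d⁄dX B (mapCoeff f p) = mapCoeff f (d⁄dX A p) := by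
  ext k
  rw [coeff_derivative, coeff_mapCoeff, coeff_mapCoeff, coeff_derivative]
  have h1 : ((k:A) + 1) = algebraMap ℚ A ((k:ℚ)+1) := by push_cast; simp
  have h2 : ((k:B) + 1) = algebraMap ℚ B ((k:ℚ)+1) := by push_cast; simp
  rw [h1, h2, mul_comm _ (algebraMap ℚ B _), mul_comm _ (algebraMap ℚ A _), ← Algebra.smul_def,
    ← Algebra.smul_def, map_smul]

lemma mapCoeff_compS (S : PowerSeries ℚ) (F : PowerSeries A) :
    mapCoeff f (compS S F) = compS S (mapCoeff f F) := by
  ext j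
  rw [coeff_mapCoeff, compS, compS, coeff_mk, coeff_mk, map_sum]
  refine Finset.sum_congr rfl fun k _ => ?_
  rw [map_smul, coeff_mapCoeff]

lemma mapCoeff_rho_mul (q : PowerSeries ℚ) (F : PowerSeries A) :
    mapCoeff f (rho q * F) = rho q * mapCoeff f F := by
  ext j
  rw [coeff_mapCoeff, coeff_mul, coeff_mul, map_sum]
  refine Finset.sum_congr rfl fun y _ => ?_
  rw [coeff_map, coeff_map, ← Algebra.smul_def, ← Algebra.smul_def, map_smul, coeff_mapCoeff]

end MapCoeff

end Stmt4Aux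
-- appended to full.lean inside namespace Stmt4Aux
namespace Stmt4Aux
open Finset PowerSeries

section Main

variable {A B : Type*} [CommRing A] [CommRing B] [Algebra ℚ A] [Algebra ℚ B] (f : A →ₗ[ℚ] B)

set_option linter.unusedSectionVars false
set_option maxHeartbeats 2000000

lemma geom_decomp (a : A) (t : ℚ) :
    geomS (a + algebraMap ℚ A t)
      = rho (C t * oneAddInv t)
        + rho (oneAddInv t * oneAddInv t) * compS (sS t) (geomS a) := by
  have hS := constantCoeff_sS t
  set c : A := a + algebraMap ℚ A t with hc
  have Vu1 : IsUnit (1 + C c * X) := IsUnit.of_mul_eq_one _ (one_add_mul_oneAddInv c)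
  have Vu2 : IsUnit (rho (uu t) : A⟦X⟧) := IsUnit.of_mul_eq_one (rho (oneAddInv t)) (by
    rw [← map_mul, uu_mul_oneAddInv, map_one])
  refine (Vu1.mul Vu2).mul_left_cancel ?_
  symm
  have lhs : ((1 + C c * X) * rho (uu t)) * geomS c = rho (uu t) * C c := by
    calc ((1 + C c * X) * rho (uu t)) * geomS c
        = rho (uu t) * ((1 + C c * X) * geomS c) := by ring
      _ = rho (uu t) * C c := by rw [one_add_mul_geomS]
  rw [lhs]
  -- now the right-hand side
  have hterm1 : (uu t) * (C t * oneAddInv t) = C t := by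
    calc (uu t) * (C t * oneAddInv t) = C t * (uu t * oneAddInv t) := by ring
      _ = C t := by rw [uu_mul_oneAddInv, mul_one]
  have hterm2 : (uu t) * (oneAddInv t * oneAddInv t) = oneAddInv t := by
    calc (uu t) * (oneAddInv t * oneAddInv t) = (uu t * oneAddInv t) * oneAddInv t := by ring
      _ = oneAddInv t := by rw [uu_mul_oneAddInv, one_mul]
  have step2 : (1 + C c * X) * rho (oneAddInv t) = 1 + C a * rho (sS t) := by
    have hX : (X : A⟦X⟧) = rho X := by rw [PowerSeries.map_X]
    have hCt : C (algebraMap ℚ A t) = rho (C t) := by rw [PowerSeries.map_C]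
    have hCc : C c = C a + C (algebraMap ℚ A t) := by rw [hc, map_add]
    have key : (oneAddInv t + C t * (X * oneAddInv t)) = 1 := by
      calc oneAddInv t + C t * (X * oneAddInv t) = (1 + C t * X) * oneAddInv t := by ring
        _ = 1 := by
            rw [show (1 + C t * X : PowerSeries ℚ) = uu t from rfl, uu_mul_oneAddInv]
    calc (1 + C c * X) * rho (oneAddInv t)
        = rho (oneAddInv t) + rho (C t) * (rho X * rho (oneAddInv t))
            + C a * (rho X * rho (oneAddInv t)) := by rw [hCc, hCt, hX]; ring
      _ = rho (oneAddInv t + C t * (X * oneAddInv t)) + C a * rho (X * oneAddInv t) := by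
          rw [map_add, map_mul, map_mul]
      _ = 1 + C a * rho (sS t) := by rw [key, map_one, sS]
  have step3 : (1 : A⟦X⟧) + C a * rho (sS t) = compS (sS t) (1 + C a * X) := by
    rw [compS_add, compS_C_mul_X hS]
    congr 1
    have h1 : compS (sS t) (C (1:A)) = C (1:A) := compS_C (1 : A)
    rw [map_one] at h1
    rw [h1]
  have step4 : compS (sS t) ((1 + C a * X) * geomS a) = compS (sS t) (C a) :=
    congrArg _ (one_add_mul_geomS a)
  calc ((1 + C c * X) * rho (uu t))
          * (rho (C t * oneAddInv t) + rho (oneAddInv t * oneAddInv t) * compS (sS t) (geomS a))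
      = (1 + C c * X) * rho (uu t * (C t * oneAddInv t))
        + ((1 + C c * X) * rho (uu t * (oneAddInv t * oneAddInv t))) * compS (sS t) (geomS a) := by
        simp only [map_mul]; ring
    _ = (1 + C c * X) * rho (C t)
        + ((1 + C a * rho (sS t))) * compS (sS t) (geomS a) := by
        rw [hterm1, hterm2, step2]
    _ = (1 + C c * X) * rho (C t)
        + compS (sS t) ((1 + C a * X) * geomS a) := by
        rw [step3, ← compS_mul hS]
    _ = (1 + C c * X) * rho (C t) + C a := by
        rw [step4, compS_C]
    _ = rho (uu t) * C c := by
        have hCc : C c = C a + C (algebraMap ℚ A t) := by rw [hc, map_add]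
        have hu : (rho (uu t) : A⟦X⟧) = 1 + C (algebraMap ℚ A t) * X := by
          rw [uu, map_add, map_one, map_mul, PowerSeries.map_C, PowerSeries.map_X]
        rw [hCc, hu, PowerSeries.map_C]
        ring

lemma M_decomp (a : A) (t : ℚ) :
    mapCoeff f (geomS (a + algebraMap ℚ A t))
      = rho (C t * oneAddInv t) * C (f 1)
        + rho (oneAddInv t * oneAddInv t) * compS (sS t) (mapCoeff f (geomS a)) := by
  rw [geom_decomp, mapCoeff_add]
  congr 1
  · have h1 : (rho (C t * oneAddInv t) : A⟦X⟧) = rho (C t * oneAddInv t) * 1 := by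
      rw [mul_one]
    rw [h1, mapCoeff_rho_mul, mapCoeff_one]
  · rw [mapCoeff_rho_mul, mapCoeff_compS]

lemma deriv_charFun (a : A) :
    d⁄dX B (charFun f a) = mapCoeff f (geomS a) * charFun f a := by
  rw [charFun, deriv_expPS (constantCoeff_mapCoeff_logOneAdd f a), deriv_mapCoeff,
    deriv_logOneAdd]

lemma constantCoeff_charFun (a : A) : constantCoeff (charFun f a) = 1 :=
  constantCoeff_expPS _

lemma psi_zero (a : A) : psi f a 0 = 1 := by
  rw [psi, coeff_zero_eq_constantCoeff, constantCoeff_charFun]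

lemma charFun_shift (n : ℕ) (hb : f 1 = n • (1:B)) (a : A) (t : ℚ) :
    charFun f (a + algebraMap ℚ A t) = rho ((uu t)^n) * compS (sS t) (charFun f a) := by
  have hS := constantCoeff_sS t
  have hQ : d⁄dX B (charFun f (a + algebraMap ℚ A t))
      = mapCoeff f (geomS (a + algebraMap ℚ A t)) * charFun f (a + algebraMap ℚ A t) :=
    deriv_charFun f _
  have dP : d⁄dX B (charFun f a) = mapCoeff f (geomS a) * charFun f a := deriv_charFun f a
  have dcomp : d⁄dX B (compS (sS t) (charFun f a))
      = compS (sS t) (mapCoeff f (geomS a)) * compS (sS t) (charFun f a)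
        * rho (oneAddInv t * oneAddInv t) := by
    rw [deriv_compS hS, dP, compS_mul hS, deriv_sS]
  have drho : d⁄dX B (rho ((uu t)^n) : B⟦X⟧) = rho (n • (C t * oneAddInv t * (uu t)^n)) := by
    rw [deriv_rho, deriv_uu_pow]
  have hZd : d⁄dX B (rho ((uu t)^n) * compS (sS t) (charFun f a))
      = mapCoeff f (geomS (a + algebraMap ℚ A t))
        * (rho ((uu t)^n) * compS (sS t) (charFun f a)) := by
    have e1 : d⁄dX B (rho ((uu t)^n) * compS (sS t) (charFun f a))
        = rho ((uu t)^n) * (compS (sS t) (mapCoeff f (geomS a)) * compS (sS t) (charFun f a)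
            * rho (oneAddInv t * oneAddInv t))
          + compS (sS t) (charFun f a) * rho (n • (C t * oneAddInv t * (uu t)^n)) := by
      rw [Derivation.leibniz, smul_eq_mul, smul_eq_mul, dcomp, drho]
    rw [e1, M_decomp f a t, hb]
    have hC : C ((n : ℕ) • (1:B)) = ((n:ℕ) : B⟦X⟧) := by
      rw [map_nsmul, map_one, nsmul_eq_mul, mul_one]
    rw [hC, map_nsmul, map_mul, map_mul]
    rw [nsmul_eq_mul]
    push_cast
    ring
  have h0 : constantCoeff (charFun f (a + algebraMap ℚ A t))
      = constantCoeff (rho ((uu t)^n) * compS (sS t) (charFun f a)) := by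
    rw [constantCoeff_charFun, map_mul, constantCoeff_compS, constantCoeff_charFun, mul_one]
    have h3 : constantCoeff (rho ((uu t)^n) : B⟦X⟧)
        = algebraMap ℚ B (constantCoeff ((uu t)^n)) := by
      rw [← coeff_zero_eq_constantCoeff, coeff_map, coeff_zero_eq_constantCoeff]
    rw [h3, map_pow]
    have hu : constantCoeff (uu t) = 1 := by
      rw [uu, map_add, map_one, map_mul, constantCoeff_X, mul_zero, add_zero]
    rw [hu, one_pow, map_one]
  exact ode_unique hQ hZd h0

lemma psi_shift (n : ℕ) (hb : f 1 = n • (1:B)) (a : A) (t : ℚ) {m : ℕ} (hm : n < m) :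
    psi f (a + algebraMap ℚ A t) m
      = ∑ k ∈ Finset.range (m+1), (((-t)^(m-k) * ((m-n-1).choose (m-k) : ℚ))) • psi f a k := by
  rw [psi, charFun_shift f n hb a t, coeff_rho_mul_compS (constantCoeff_sS t)]
  refine Finset.sum_congr rfl fun k hk => ?_
  rw [coeff_uu_pow_mul_sS_pow t n k m hm (by simp at hk; omega)]
  rfl

/-- polynomial vanishing at all rationals -/
lemma poly_vanish (d : ℕ) (c : ℕ → B)
    (h : ∀ t : ℚ, ∑ r ∈ Finset.range d, t ^ r • c r = 0) :
    ∀ r, r < d → c r = 0 := by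
  set V : Matrix (Fin d) (Fin d) ℚ := Matrix.vandermonde (fun i => (i : ℚ)) with hV
  have hdet : V.det ≠ 0 := by
    rw [hV, Matrix.det_vandermonde]
    refine Finset.prod_ne_zero_iff.mpr fun i _ => Finset.prod_ne_zero_iff.mpr fun j hj => ?_
    rw [Finset.mem_Ioi] at hj
    have h1 : (i : ℕ) < (j : ℕ) := hj
    have h2 : (i : ℚ) < (j : ℚ) := by exact_mod_cast h1
    exact sub_ne_zero_of_ne (ne_of_gt h2)
  have hinv : V⁻¹ * V = 1 := Matrix.nonsing_inv_mul V (isUnit_iff_ne_zero.mpr hdet)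
  have hrow : ∀ i : Fin d, ∑ j : Fin d, V i j • c j = 0 := by
    intro i
    have := h (i : ℚ)
    rw [← Fin.sum_univ_eq_sum_range (fun r => ((i:ℚ)) ^ r • c r) d] at this
    simpa [hV, Matrix.vandermonde] using this
  intro r hr
  have key : ∀ k : Fin d, c k = 0 := by
    intro k
    have e1 : c k = ∑ j : Fin d, (1 : Matrix (Fin d) (Fin d) ℚ) k j • c j := by
      rw [Finset.sum_eq_single k]
      · simp
      · intro j _ hj
        rw [Matrix.one_apply_ne (Ne.symm hj), zero_smul]
      · intro hk
        exact absurd (Finset.mem_univ k) hk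
    rw [e1, ← hinv]
    have e2 : ∀ j, (V⁻¹ * V) k j • c j = ∑ l : Fin d, (V⁻¹ k l * V l j) • c j := by
      intro j
      rw [Matrix.mul_apply, Finset.sum_smul]
    rw [Finset.sum_congr rfl fun j _ => e2 j, Finset.sum_comm]
    rw [Finset.sum_eq_zero]
    intro l _
    rw [Finset.sum_congr rfl fun j _ => (mul_smul (V⁻¹ k l) (V l j) (c j))]
    rw [← Finset.smul_sum, hrow l, smul_zero]
  exact key ⟨r, hr⟩

/- recursion for `psi f 1` -/
lemma psi_one_succ (k : ℕ) :
    psi f 1 (k+1) * (((k+1 : ℕ)) : B) = (f 1 - (k:ℕ) • (1:B)) * psi f 1 k := by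
  have h2 : (1 + X : B⟦X⟧) * mapCoeff f (geomS (1:A)) = C (f 1) := by
    have hX : (1 + X : B⟦X⟧) = rho (1 + X) := by
      rw [map_add, map_one, PowerSeries.map_X]
    rw [hX, ← mapCoeff_rho_mul]
    have hA : (rho (1 + X) : A⟦X⟧) * geomS (1:A) = 1 := by
      have hXA : (rho (1 + X) : A⟦X⟧) = 1 + X := by
        rw [map_add, map_one, PowerSeries.map_X]
      have h3 := one_add_mul_geomS (1:A)
      rw [map_one, one_mul] at h3
      rw [hXA, h3]
    rw [hA, mapCoeff_one]
  have h1 : (1 + X : B⟦X⟧) * d⁄dX B (charFun f (1:A)) = C (f 1) * charFun f 1 := by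
    rw [deriv_charFun]
    calc (1 + X : B⟦X⟧) * (mapCoeff f (geomS (1:A)) * charFun f 1)
        = ((1 + X) * mapCoeff f (geomS (1:A))) * charFun f 1 := by ring
      _ = C (f 1) * charFun f 1 := by rw [h2]
  have hco := congrArg (coeff k) h1
  rw [add_mul, one_mul, map_add, coeff_X_mul', coeff_derivative, coeff_C_mul] at hco
  cases k with
  | zero =>
    rw [if_pos rfl, add_zero] at hco
    rw [show psi f 1 1 = coeff 1 (charFun f (1:A)) from rfl,
      show psi f 1 0 = coeff 0 (charFun f (1:A)) from rfl]
    push_cast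
    rw [zero_smul, sub_zero]
    push_cast at hco
    linear_combination hco
  | succ j =>
    rw [if_neg (Nat.succ_ne_zero j)] at hco
    simp only [Nat.add_sub_cancel] at hco
    rw [coeff_derivative] at hco
    rw [show psi f 1 (j+1+1) = coeff (j+1+1) (charFun f (1:A)) from rfl,
      show psi f 1 (j+1) = coeff (j+1) (charFun f (1:A)) from rfl]
    have hsm : ((j+1 : ℕ)) • (1:B) = ((j:B) + 1) := by
      rw [nsmul_eq_mul, mul_one]
      push_cast
      rfl
    rw [hsm]
    push_cast
    push_cast at hco
    linear_combination hco

lemma psi_one_formula (k : ℕ) :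
    psi f 1 k = ((k.factorial : ℚ))⁻¹ • ∏ j ∈ Finset.range k, (f 1 - (j:ℕ) • (1:B)) := by
  induction k with
  | zero =>
    rw [psi_zero]
    simp
  | succ k ih =>
    have hrec := psi_one_succ f k
    have hne : (((k+1:ℕ)) : ℚ) ≠ 0 := by push_cast; positivity
    have hcast : (((k+1:ℕ)) : B) = algebraMap ℚ B (((k+1:ℕ)) : ℚ) := by rw [map_natCast]
    have h2 : psi f 1 (k+1) = ((((k+1:ℕ)):ℚ))⁻¹ • ((f 1 - (k:ℕ) • (1:B)) * psi f 1 k) := by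
      have h3 : psi f 1 (k+1) * (((k+1 : ℕ)) : B)
          = (((k+1:ℕ)):ℚ) • psi f 1 (k+1) := by
        rw [hcast, Algebra.smul_def, mul_comm]
      rw [h3] at hrec
      have := congrArg (fun z => ((((k+1:ℕ)):ℚ))⁻¹ • z) hrec
      simp only [smul_smul, inv_mul_cancel₀ hne, one_smul] at this
      exact this
    rw [h2, ih, mul_smul_comm, smul_smul, Finset.prod_range_succ]
    congr 1
    · rw [Nat.factorial_succ]
      push_cast
      rw [mul_inv]
    · ring

end Main

end Stmt4Aux
open Stmt4Aux Finset in
/-- if `B` is connected and nontrivial and `ψ_k(f,a) = 0` for all `k > N`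
and all `a`, then there is `n ≤ N` with `f(1) = n·1_B`, `ψ_k(f,a) = 0` for all `k > n`
and all `a`, and `ψ_n(f,1) = 1`. -/
theorem stmt4 {A B : Type*} [CommRing A] [CommRing B] [Algebra ℚ A] [Algebra ℚ B]
    [Nontrivial B]
    (hconn : ∀ (b : B) (k : ℕ), (∏ j ∈ Finset.range (k + 1), (b - (j : ℕ) • (1 : B))) = 0 →
      ∃ j : ℕ, j ≤ k ∧ b = j • (1 : B))
    (f : A →ₗ[ℚ] B) (N : ℕ)
    (hN : ∀ k : ℕ, N < k → ∀ a : A, psi f a k = 0) :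
    ∃ n : ℕ, n ≤ N ∧ f 1 = n • (1 : B) ∧
      (∀ k : ℕ, n < k → ∀ a : A, psi f a k = 0) ∧
      psi f 1 n = 1 := by
  classical
  have hψ : psi f 1 (N+1) = 0 := hN (N+1) (by omega) 1
  have hfact_ne : (((N+1).factorial : ℚ)) ≠ 0 := by
    exact_mod_cast (Nat.factorial_pos (N+1)).ne'
  have hprod : (∏ j ∈ Finset.range (N + 1), (f 1 - (j : ℕ) • (1 : B))) = 0 := by
    have hform := psi_one_formula f (N+1)
    rw [hψ] at hform
    have h1 : (((N+1).factorial : ℚ))⁻¹ • (∏ j ∈ Finset.range (N+1), (f 1 - (j:ℕ) • (1:B))) = 0 :=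
      hform.symm
    calc (∏ j ∈ Finset.range (N + 1), (f 1 - (j : ℕ) • (1 : B)))
        = (((N+1).factorial : ℚ) * (((N+1).factorial : ℚ))⁻¹)
            • (∏ j ∈ Finset.range (N + 1), (f 1 - (j : ℕ) • (1 : B))) := by
          rw [mul_inv_cancel₀ hfact_ne, one_smul]
      _ = (((N+1).factorial : ℚ)) • ((((N+1).factorial : ℚ))⁻¹
            • (∏ j ∈ Finset.range (N + 1), (f 1 - (j : ℕ) • (1 : B)))) := by rw [mul_smul]
      _ = 0 := by rw [h1, smul_zero]
  obtain ⟨n, hnN, hb⟩ := hconn (f 1) N hprod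
  refine ⟨n, hnN, hb, ?_, ?_⟩
  · -- vanishing beyond n
    intro k hk a
    rcases le_or_gt k (N+1) with hkN | hkN'
    · set m := N + 1 with hm
      have hnm : n < m := by omega
      have hall : ∀ t : ℚ, ∑ r ∈ Finset.range (m+1),
          t ^ r • (((-1:ℚ)^r * ((m-n-1).choose r : ℚ)) • psi f a (m - r)) = 0 := by
        intro t
        have h1 := psi_shift f n hb a t hnm
        have h2 : psi f (a + algebraMap ℚ A t) m = 0 := hN m (by omega) _
        rw [h2] at h1
        have h3 := Finset.sum_range_reflect
          (fun k => (((-t)^(m-k) * ((m-n-1).choose (m-k) : ℚ))) • psi f a k) (m+1)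
        rw [← h3] at h1
        -- h1 : 0 = ∑ j, g (m + 1 - 1 - j)
        rw [eq_comm] at h1
        calc ∑ r ∈ Finset.range (m+1),
              t ^ r • (((-1:ℚ)^r * ((m-n-1).choose r : ℚ)) • psi f a (m - r))
            = ∑ r ∈ Finset.range (m+1),
              (((-t)^(m-(m + 1 - 1 - r)) * ((m-n-1).choose (m-(m + 1 - 1 - r)) : ℚ)))
                • psi f a (m + 1 - 1 - r) := by
              refine Finset.sum_congr rfl fun r hr => ?_
              have hr' : r ≤ m := by simp at hr; omega
              have e1 : m + 1 - 1 - r = m - r := by omega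
              have e2 : m - (m - r) = r := by omega
              rw [e1, e2, smul_smul]
              congr 1
              rw [neg_pow]
              ring
          _ = 0 := h1
      have hvanish := poly_vanish (m+1) _ hall
      have hr : m - k < m + 1 := by omega
      have hzero := hvanish (m - k) hr
      rw [show m - (m - k) = k from by omega] at hzero
      have hch : ((m-n-1).choose (m-k) : ℚ) ≠ 0 := by
        have hle : m - k ≤ m - n - 1 := by omega
        exact_mod_cast (Nat.choose_pos hle).ne'
      have hsc : ((-1:ℚ)^(m-k) * ((m-n-1).choose (m-k):ℚ)) ≠ 0 :=
        mul_ne_zero (pow_ne_zero _ (by norm_num)) hch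
      have h5 := congrArg (fun z => (((-1:ℚ)^(m-k) * ((m-n-1).choose (m-k):ℚ))⁻¹) • z) hzero
      simp only [smul_smul, smul_zero] at h5
      rwa [inv_mul_cancel₀ hsc, one_smul] at h5
    · exact hN k (by omega) a
  · -- psi f 1 n = 1
    rw [psi_one_formula, hb]
    have hterm : ∀ j ∈ Finset.range n, ((n:ℕ) • (1:B) - (j:ℕ) • (1:B)) = (((n - j : ℕ)) : B) := by
      intro j hj
      simp only [Finset.mem_range] at hj
      rw [nsmul_eq_mul, nsmul_eq_mul, mul_one, mul_one, ← Nat.cast_sub (le_of_lt hj)]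
    rw [Finset.prod_congr rfl hterm, ← Nat.cast_prod]
    have hfac : (∏ j ∈ Finset.range n, (n - j)) = n.factorial := by
      calc (∏ j ∈ Finset.range n, (n - j))
          = ∏ j ∈ Finset.range n, ((fun j => j + 1) (n - 1 - j)) := by
            refine Finset.prod_congr rfl fun j hj => ?_
            simp only [Finset.mem_range] at hj
            show n - j = n - 1 - j + 1
            omega
        _ = ∏ j ∈ Finset.range n, (j + 1) := Finset.prod_range_reflect _ n
        _ = n.factorial := Finset.prod_range_add_one_eq_factorial n
    rw [hfac]
    have hfac_ne : ((n.factorial : ℕ) : ℚ) ≠ 0 := by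
      exact_mod_cast (Nat.factorial_pos n).ne'
    have h1 : ((n.factorial : ℕ) : B) = (((n.factorial : ℕ)) : ℚ) • (1:B) := by
      rw [Algebra.smul_def, mul_one, map_natCast]
    rw [h1, smul_smul, inv_mul_cancel₀ hfac_ne, one_smul]
end

section
/- Let f : A → B be an n-homomorphism. Then for every a ∈ A the f-Berezinian ber_f(a) := Σ_{k=0}^{n} ψ_k(f, a−1) equals ψ_n(f,a). -/
open PowerSeries

namespace Stmt9Aux

open Finset

variable {R : Type*} [CommRing R]

/-- vanishing of low coefficients of powers of a series with zero constant term -/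
lemma coeff_pow_eq_zero {σ : R⟦X⟧} (hσ : constantCoeff σ = 0) {k j : ℕ} (h : k < j) :
    PowerSeries.coeff k (σ ^ j) = 0 := by
  obtain ⟨t, ht⟩ := PowerSeries.X_dvd_iff.2 hσ
  have h2 : σ ^ j = t ^ j * PowerSeries.X ^ j := by rw [ht]; ring
  rw [h2, PowerSeries.coeff_mul_X_pow', if_neg (by omega)]

/-- the series T/(1+T) -/
noncomputable def sS (R : Type*) [CommRing R] : R⟦X⟧ :=
  PowerSeries.mk fun k => if k = 0 then 0 else (-1) ^ (k + 1)

lemma constantCoeff_sS : constantCoeff (sS R) = 0 := by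
  simp [sS, ← PowerSeries.coeff_zero_eq_constantCoeff]

lemma sS_mul_one_add_X : sS R * (1 + X) = X := by
  have : sS R * (1 + X) = sS R + sS R * X := by ring
  rw [this]
  ext k
  rw [map_add]
  match k with
  | 0 => simp [sS, ← PowerSeries.coeff_zero_eq_constantCoeff, PowerSeries.coeff_zero_mul_X]
  | 1 => simp [sS, PowerSeries.coeff_succ_mul_X]
  | (k+2) => simp [sS, PowerSeries.coeff_succ_mul_X, PowerSeries.coeff_X, pow_succ]

/-- substitution of sS into a power series, defined coefficientwise -/
noncomputable def substS (p : R⟦X⟧) : R⟦X⟧ :=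
  PowerSeries.mk fun k => ∑ j ∈ range (k + 1),
    PowerSeries.coeff j p * PowerSeries.coeff k (sS R ^ j)

lemma coeff_aeval_sS (P : Polynomial R) (k : ℕ) :
    PowerSeries.coeff k (Polynomial.aeval (sS R) P) =
      ∑ j ∈ range (k + 1), P.coeff j * PowerSeries.coeff k (sS R ^ j) := by
  rw [Polynomial.aeval_eq_sum_range' (n := P.natDegree + 1 + (k + 1)) (by omega), map_sum]
  simp only [LinearMap.map_smul, smul_eq_mul]
  refine (Finset.sum_subset (Finset.range_subset_range.mpr (by omega)) ?_).symm
  intro j hj hj'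
  rw [coeff_pow_eq_zero constantCoeff_sS (by simp at hj'; omega), mul_zero]

lemma coeff_substS (p : R⟦X⟧) {k m : ℕ} (h : k < m) :
    PowerSeries.coeff k (substS p) =
      PowerSeries.coeff k (Polynomial.aeval (sS R) (trunc m p)) := by
  rw [coeff_aeval_sS, substS, coeff_mk]
  refine Finset.sum_congr rfl fun j hj => ?_
  rw [coeff_trunc, if_pos (by simp at hj; omega)]

lemma constantCoeff_substS (p : R⟦X⟧) :
    constantCoeff (substS p) = constantCoeff p := by
  rw [← PowerSeries.coeff_zero_eq_constantCoeff, substS, coeff_mk]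
  simp [← PowerSeries.coeff_zero_eq_constantCoeff]

lemma substS_add (p q : R⟦X⟧) : substS (p + q) = substS p + substS q := by
  ext k
  simp [substS, add_mul, Finset.sum_add_distrib]

lemma substS_C (r : R) : substS (C r) = C r := by
  ext k
  rw [substS, coeff_mk, Finset.sum_eq_single 0]
  · simp [PowerSeries.coeff_C, PowerSeries.coeff_one]
  · intro j hj hj0
    simp [PowerSeries.coeff_C, hj0]
  · simp

lemma substS_one : substS (1 : R⟦X⟧) = 1 := by
  have := substS_C (1 : R)
  rwa [map_one] at this

lemma substS_X : substS (X : R⟦X⟧) = sS R := by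
  ext k
  rw [substS, coeff_mk]
  match k with
  | 0 => simp [sS]
  | (k+1) =>
    rw [Finset.sum_eq_single 1]
    · simp
    · intro j hj hj1
      simp [PowerSeries.coeff_X, hj1]
    · intro h
      simp at h

lemma substS_mul (p q : R⟦X⟧) : substS (p * q) = substS p * substS q := by
  ext k
  rw [PowerSeries.coeff_mul]
  have h1 : ∀ uv ∈ antidiagonal k,
      PowerSeries.coeff uv.1 (substS p) * PowerSeries.coeff uv.2 (substS q) =
      PowerSeries.coeff uv.1 (Polynomial.aeval (sS R) (trunc (k+1) p)) *
        PowerSeries.coeff uv.2 (Polynomial.aeval (sS R) (trunc (k+1) q)) := by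
    intro uv huv
    rw [coeff_substS p (Nat.lt_succ_of_le (Finset.HasAntidiagonal.antidiagonal.fst_le huv)),
      coeff_substS q (Nat.lt_succ_of_le (Finset.HasAntidiagonal.antidiagonal.snd_le huv))]
  rw [Finset.sum_congr rfl h1, ← PowerSeries.coeff_mul, ← map_mul,
    coeff_substS (p * q) (Nat.lt_succ_self k), coeff_aeval_sS, coeff_aeval_sS]
  refine Finset.sum_congr rfl fun j hj => ?_
  simp only [mem_range] at hj
  congr 1
  rw [coeff_trunc, if_pos hj, PowerSeries.coeff_mul_eq_coeff_trunc_mul_trunc p q hj,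
    ← Polynomial.coe_mul, Polynomial.coeff_coe]

lemma substS_pow (p : R⟦X⟧) (m : ℕ) : substS (p ^ m) = substS p ^ m := by
  induction m with
  | zero => simpa using substS_one
  | succ m ih => rw [pow_succ, substS_mul, ih, pow_succ]

lemma derivative_aeval (σ : R⟦X⟧) (P : Polynomial R) :
    d⁄dX R (Polynomial.aeval σ P) =
      Polynomial.aeval σ (Polynomial.derivative P) * d⁄dX R σ := by
  induction P using Polynomial.induction_on' with
  | add p q hp hq =>
    simp only [map_add, hp, hq]
    ring
  | monomial j c =>
    rw [Polynomial.aeval_monomial, Polynomial.derivative_monomial, Polynomial.aeval_monomial,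
      Derivation.leibniz, Derivation.leibniz_pow]
    have hC : d⁄dX R ((algebraMap R R⟦X⟧) c) = 0 := derivative_C (r := c)
    rw [hC, smul_zero, add_zero, map_mul, map_natCast]
    simp only [smul_eq_mul, nsmul_eq_mul]
    ring

lemma derivative_substS (p : R⟦X⟧) :
    d⁄dX R (substS p) = substS (d⁄dX R p) * d⁄dX R (sS R) := by
  ext k
  rw [coeff_derivative, coeff_substS p (show k + 1 < k + 2 by omega), ← coeff_derivative,
    derivative_aeval, ← PowerSeries.trunc_derivative]
  rw [PowerSeries.coeff_mul, PowerSeries.coeff_mul]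
  refine Finset.sum_congr rfl fun uv huv => ?_
  rw [coeff_substS (d⁄dX R p) (Nat.lt_succ_of_le (Finset.HasAntidiagonal.antidiagonal.fst_le huv))]

lemma one_add_X_sq_mul_derivative_sS :
    ((1 : R⟦X⟧) + X) ^ 2 * d⁄dX R (sS R) = 1 := by
  have h := congrArg (d⁄dX R) (sS_mul_one_add_X (R := R))
  rw [Derivation.leibniz, derivative_X, map_add, Derivation.map_one_eq_zero, derivative_X,
    zero_add, smul_eq_mul, mul_one, smul_eq_mul] at h
  have hs := sS_mul_one_add_X (R := R)
  linear_combination (1 + (X : R⟦X⟧)) * h - hs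

/-- uniqueness for first order linear ODEs with ℚ-algebra coefficients -/
lemma ode_unique {B : Type*} [CommRing B] [Algebra ℚ B] {y z w : B⟦X⟧}
    (hy : d⁄dX B y = y * w) (hz : d⁄dX B z = z * w)
    (h0 : constantCoeff y = constantCoeff z) : y = z := by
  ext k
  induction k using Nat.strong_induction_on with
  | _ k ih =>
    match k with
    | 0 => simpa [PowerSeries.coeff_zero_eq_constantCoeff] using h0
    | (k+1) =>
      have h1 : PowerSeries.coeff k (y * w) = PowerSeries.coeff k (z * w) := by
        rw [PowerSeries.coeff_mul, PowerSeries.coeff_mul]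
        refine Finset.sum_congr rfl fun uv huv => ?_
        rw [ih uv.1 (Nat.lt_succ_of_le (Finset.HasAntidiagonal.antidiagonal.fst_le huv))]
      have h2 : PowerSeries.coeff (k+1) y * ((k:B) + 1) =
          PowerSeries.coeff (k+1) z * ((k:B) + 1) := by
        have h1' := h1
        rw [← hy, ← hz, coeff_derivative, coeff_derivative] at h1'
        exact_mod_cast h1'
      have h3 : ((k : B) + 1) = algebraMap ℚ B ((k : ℚ) + 1) := by
        push_cast
        simp
      rw [h3, mul_comm _ (algebraMap ℚ B _), mul_comm _ (algebraMap ℚ B _),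
        ← Algebra.smul_def, ← Algebra.smul_def] at h2
      have h4 := congrArg (fun x => (((k:ℚ)+1)⁻¹) • x) h2
      simpa [smul_smul, inv_mul_cancel₀ (show ((k:ℚ)+1) ≠ 0 by positivity)] using h4

section QAlgebra

variable {A : Type*} [CommRing A] [Algebra ℚ A]

lemma nzsd : NoZeroSMulDivisors ℕ A := by
  constructor
  intro n x h
  rcases Nat.eq_zero_or_pos n with h0 | h0
  · exact Or.inl h0
  · right
    have h1 : ((n : ℚ)) • x = 0 := by rwa [Nat.cast_smul_eq_nsmul]
    have h2 := congrArg (fun y => ((n : ℚ))⁻¹ • y) h1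
    simpa [smul_smul, inv_mul_cancel₀ (show (n:ℚ) ≠ 0 by exact_mod_cast h0.ne')] using h2

lemma constantCoeff_logOneAdd (b : A) : constantCoeff (logOneAdd b) = 0 := by
  rw [← PowerSeries.coeff_zero_eq_constantCoeff, logOneAdd, coeff_mk]
  norm_num

/-- the series b/(1+bT) = Σ (-1)^k b^(k+1) T^k -/
noncomputable def gS (b : A) : A⟦X⟧ := PowerSeries.mk fun k => (-1 : A) ^ k * b ^ (k + 1)

lemma derivative_logOneAdd (b : A) : d⁄dX A (logOneAdd b) = gS b := by
  ext k
  rw [coeff_derivative, logOneAdd, coeff_mk, gS, coeff_mk, Algebra.smul_def]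
  have h3 : ((k : A) + 1) = algebraMap ℚ A ((k : ℚ) + 1) := by
    rw [map_add, map_natCast, map_one]
  have hkcast : (((k + 1 : ℕ) : ℚ)) = (k : ℚ) + 1 := by push_cast; ring
  have h2 : ((-1 : ℚ) ^ (k + 1 + 1) / ((k + 1 : ℕ) : ℚ)) * ((k : ℚ) + 1) = (-1 : ℚ) ^ k := by
    rw [hkcast]
    have hne : ((k : ℚ) + 1) ≠ 0 := by positivity
    field_simp
    rw [pow_succ, pow_succ]
    ring
  calc (algebraMap ℚ A ((-1 : ℚ) ^ (k + 1 + 1) / ((k + 1 : ℕ) : ℚ)) * b ^ (k + 1)) * ((k : A) + 1)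
      = algebraMap ℚ A (((-1 : ℚ) ^ (k + 1 + 1) / ((k + 1 : ℕ) : ℚ)) * ((k : ℚ) + 1)) * b ^ (k + 1) := by
        rw [map_mul, h3]; ring
    _ = (-1 : A) ^ k * b ^ (k + 1) := by rw [h2, map_pow, map_neg, map_one]

lemma one_add_mul_gS (b : A) : (1 + C b * X) * gS b = C b := by
  have hexp : (1 + C b * X) * gS b = gS b + C b * (gS b * X) := by ring
  rw [hexp]
  ext k
  rw [map_add]
  match k with
  | 0 =>
    simp [gS, ← PowerSeries.coeff_zero_eq_constantCoeff, PowerSeries.coeff_zero_mul_X]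
  | (k+1) =>
    rw [PowerSeries.coeff_C_mul, PowerSeries.coeff_succ_mul_X]
    simp [gS, PowerSeries.coeff_C, pow_succ]
    ring

lemma substS_logOneAdd (a : A) :
    substS (logOneAdd (a - 1)) = logOneAdd a - logOneAdd 1 := by
  haveI := nzsd (A := A)
  haveI := IsAddTorsionFree.of_module_rat A
  apply derivative.ext
  · rw [derivative_substS, derivative_logOneAdd, map_sub, derivative_logOneAdd,
      derivative_logOneAdd]
    have hC : C (a - 1) = C a - 1 := by rw [map_sub, map_one]
    have hu : IsUnit ((1 + C a * X) * (1 + X) : A⟦X⟧) := by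
      apply PowerSeries.isUnit_iff_constantCoeff.mpr ?_
      simp [constantCoeff_X]
    apply hu.mul_left_cancel
    have h5 : (1 + C (a - 1) * sS A) * substS (gS (a - 1)) = C (a - 1) := by
      have := congrArg substS (one_add_mul_gS (a - 1))
      rwa [substS_mul, substS_add, substS_one, substS_mul, substS_C, substS_X] at this
    have h6 := one_add_X_sq_mul_derivative_sS (R := A)
    have h7 : (1 + C (a - 1) * sS A) * (1 + X) = 1 + C a * X := by
      have hs := sS_mul_one_add_X (R := A)
      rw [hC]
      linear_combination (C a - 1) * hs
    have hL : ((1 + C a * X) * (1 + X)) * (substS (gS (a - 1)) * d⁄dX A (sS A))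
        = C (a - 1) := by
      linear_combination (-(1 + X) * substS (gS (a - 1)) * d⁄dX A (sS A)) * h7
        + ((1 + C (a - 1) * sS A) * substS (gS (a - 1))) * h6 + h5
    have h1'' : (1 + X) * gS (1 : A) = 1 := by
      have := one_add_mul_gS (1 : A)
      rwa [map_one, one_mul] at this
    have hR : ((1 + C a * X) * (1 + X)) * (gS a - gS 1) = C (a - 1) := by
      have ha := one_add_mul_gS a
      linear_combination (1 + X) * ha - (1 + C a * X) * h1'' - hC
    exact hL.trans hR.symm
  · rw [constantCoeff_substS, constantCoeff_logOneAdd, map_sub, constantCoeff_logOneAdd,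
      constantCoeff_logOneAdd, sub_zero]

variable {B : Type*} [CommRing B] [Algebra ℚ B] (f : A →ₗ[ℚ] B)

lemma sS_eq_map : sS A = PowerSeries.map (algebraMap ℚ A) (sS ℚ) := by
  ext k
  simp only [sS, coeff_mk, PowerSeries.coeff_map, apply_ite (algebraMap ℚ A), map_zero,
    map_pow, map_neg, map_one]

lemma coeff_sS_pow (k j : ℕ) :
    PowerSeries.coeff k (sS A ^ j) = algebraMap ℚ A (PowerSeries.coeff k (sS ℚ ^ j)) := by
  rw [sS_eq_map, ← map_pow, PowerSeries.coeff_map]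

lemma constantCoeff_mapCoeff (p : A⟦X⟧) :
    constantCoeff (mapCoeff f p) = f (constantCoeff p) := by
  rw [← PowerSeries.coeff_zero_eq_constantCoeff, mapCoeff, coeff_mk,
    PowerSeries.coeff_zero_eq_constantCoeff]

lemma mapCoeff_add (p q : A⟦X⟧) : mapCoeff f (p + q) = mapCoeff f p + mapCoeff f q := by
  ext k
  simp [mapCoeff]

lemma mapCoeff_substS (p : A⟦X⟧) :
    mapCoeff f (substS p) = substS (mapCoeff f p) := by
  ext k
  rw [mapCoeff, coeff_mk, substS, coeff_mk, substS, coeff_mk, map_sum]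
  refine Finset.sum_congr rfl fun j hj => ?_
  rw [coeff_sS_pow k j, mapCoeff, coeff_mk, mul_comm _ (algebraMap ℚ A _),
    ← Algebra.smul_def, map_smul, Algebra.smul_def, mul_comm]
  conv_rhs => rw [coeff_sS_pow k j]

lemma mapCoeff_logOneAdd_one {n : ℕ} (hf1 : f 1 = n • (1 : B)) :
    mapCoeff f (logOneAdd (1 : A)) = n • logOneAdd (1 : B) := by
  ext k
  rw [map_nsmul, mapCoeff, coeff_mk, logOneAdd, coeff_mk, logOneAdd, coeff_mk]
  rw [map_smul, one_pow, one_pow, hf1, smul_comm]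

lemma coeff_expPS_of_le {p : B⟦X⟧} (hp : constantCoeff p = 0) {k N : ℕ} (h : k + 1 ≤ N) :
    PowerSeries.coeff k (expPS p) =
      ∑ m ∈ range N, ((m.factorial : ℚ)⁻¹) • PowerSeries.coeff k (p ^ m) := by
  rw [expPS, coeff_mk]
  refine Finset.sum_subset (Finset.range_subset_range.mpr h) fun m hm hm' => ?_
  rw [coeff_pow_eq_zero hp (by simp only [mem_range, not_lt] at hm' ⊢; omega), smul_zero]

lemma constantCoeff_expPS (p : B⟦X⟧) : constantCoeff (expPS p) = 1 := by
  rw [← PowerSeries.coeff_zero_eq_constantCoeff, expPS, coeff_mk]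
  simp [← PowerSeries.coeff_zero_eq_constantCoeff]

lemma derivative_expPS {p : B⟦X⟧} (hp : constantCoeff p = 0) :
    d⁄dX B (expPS p) = expPS p * d⁄dX B p := by
  ext k
  rw [coeff_derivative, PowerSeries.coeff_mul, coeff_expPS_of_le hp (le_refl (k + 2))]
  have h1 : ∀ uv ∈ antidiagonal k,
      PowerSeries.coeff uv.1 (expPS p) * PowerSeries.coeff uv.2 (d⁄dX B p) =
      ∑ m ∈ range (k + 1), ((m.factorial : ℚ)⁻¹) •
        (PowerSeries.coeff uv.1 (p ^ m) * PowerSeries.coeff uv.2 (d⁄dX B p)) := by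
    intro uv huv
    rw [coeff_expPS_of_le hp (Nat.succ_le_succ (Finset.HasAntidiagonal.antidiagonal.fst_le huv)), Finset.sum_mul]
    exact Finset.sum_congr rfl fun m hm => smul_mul_assoc _ _ _
  rw [Finset.sum_congr rfl h1, Finset.sum_comm]
  have h2 : ∀ m ∈ range (k + 1),
      (∑ uv ∈ antidiagonal k, ((m.factorial : ℚ)⁻¹) •
        (PowerSeries.coeff uv.1 (p ^ m) * PowerSeries.coeff uv.2 (d⁄dX B p)))
      = (((m + 1).factorial : ℚ)⁻¹) • (PowerSeries.coeff (k + 1) (p ^ (m + 1)) * ((k : B) + 1)) := by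
    intro m hm
    rw [← Finset.smul_sum, ← PowerSeries.coeff_mul]
    have hD : d⁄dX B (p ^ (m + 1)) = (m + 1) • (p ^ m * d⁄dX B p) := by
      rw [Derivation.leibniz_pow]
      simp only [Nat.add_sub_cancel, smul_eq_mul, nsmul_eq_mul]
      try ring
    have h4 : PowerSeries.coeff k (d⁄dX B (p ^ (m + 1))) =
        ((m : ℚ) + 1) • PowerSeries.coeff k (p ^ m * d⁄dX B p) := by
      rw [hD, map_nsmul, ← Nat.cast_smul_eq_nsmul ℚ]
      try push_cast
      try ring_nf
    have h5 : PowerSeries.coeff k (p ^ m * d⁄dX B p) =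
        (((m : ℚ) + 1))⁻¹ • (PowerSeries.coeff (k + 1) (p ^ (m + 1)) * ((k : B) + 1)) := by
      have hne : ((m : ℚ) + 1) ≠ 0 := by positivity
      have h6 := congrArg (fun x => (((m : ℚ) + 1))⁻¹ • x) h4
      simp only [smul_smul, inv_mul_cancel₀ hne, one_smul] at h6
      rw [← h6, coeff_derivative]
      try push_cast
      try ring_nf
    rw [h5, smul_smul]
    congr 1
    rw [Nat.factorial_succ]
    push_cast
    rw [mul_inv]
    ring
  rw [Finset.sum_congr rfl h2, Finset.sum_mul, Finset.sum_range_succ']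
  have h8 : ((Nat.factorial 0 : ℚ))⁻¹ • PowerSeries.coeff (k + 1) (p ^ 0) * ((k : B) + 1) = 0 := by
    simp [PowerSeries.coeff_one]
  rw [h8, add_zero]
  refine Finset.sum_congr rfl fun i hi => ?_
  rw [smul_mul_assoc]

lemma expPS_add {p q : B⟦X⟧} (hp : constantCoeff p = 0) (hq : constantCoeff q = 0) :
    expPS (p + q) = expPS p * expPS q := by
  apply ode_unique (w := d⁄dX B p + d⁄dX B q)
  · rw [derivative_expPS (by rw [map_add, hp, hq, add_zero]), map_add]
  · rw [Derivation.leibniz, derivative_expPS hp, derivative_expPS hq, smul_eq_mul, smul_eq_mul]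
    ring
  · rw [constantCoeff_expPS, map_mul, constantCoeff_expPS, constantCoeff_expPS, one_mul]

lemma expPS_zero : expPS (0 : B⟦X⟧) = 1 := by
  ext k
  rw [expPS, coeff_mk, Finset.sum_range_succ']
  simp

lemma expPS_nsmul (m : ℕ) {p : B⟦X⟧} (hp : constantCoeff p = 0) :
    expPS (m • p) = expPS p ^ m := by
  induction m with
  | zero => simpa using expPS_zero
  | succ m ih =>
    rw [succ_nsmul, expPS_add (by rw [map_nsmul, hp, smul_zero]) hp, ih, pow_succ]

lemma expPS_logOneAdd_one : expPS (logOneAdd (1 : B)) = 1 + X := by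
  apply ode_unique (w := gS (1 : B))
  · rw [derivative_expPS (constantCoeff_logOneAdd 1), derivative_logOneAdd]
  · rw [map_add, Derivation.map_one_eq_zero, derivative_X, zero_add]
    have h := one_add_mul_gS (1 : B)
    rw [map_one, one_mul] at h
    exact h.symm
  · rw [constantCoeff_expPS, map_add, map_one, constantCoeff_X, add_zero]

lemma substS_expPS {p : B⟦X⟧} (hp : constantCoeff p = 0) :
    substS (expPS p) = expPS (substS p) := by
  apply ode_unique (w := substS (d⁄dX B p) * d⁄dX B (sS B))
  · rw [derivative_substS, derivative_expPS hp, substS_mul]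
    ring
  · rw [derivative_expPS (by rw [constantCoeff_substS, hp]), derivative_substS]
    try ring
  · rw [constantCoeff_substS, constantCoeff_expPS, constantCoeff_expPS]

lemma charFun_eq {n : ℕ} (hf1 : f 1 = n • (1 : B)) (a : A) :
    charFun f a = (1 + X) ^ n * substS (charFun f (a - 1)) := by
  have h1 : logOneAdd a = logOneAdd (1 : A) + substS (logOneAdd (a - 1)) := by
    rw [substS_logOneAdd]
    ring
  have h2 : mapCoeff f (logOneAdd a) =
      (n • logOneAdd (1 : B)) + substS (mapCoeff f (logOneAdd (a - 1))) := by
    rw [h1, mapCoeff_add, mapCoeff_logOneAdd_one f hf1, mapCoeff_substS]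
  have hc1 : constantCoeff (n • logOneAdd (1 : B)) = 0 := by
    rw [map_nsmul, constantCoeff_logOneAdd, smul_zero]
  have hcM : constantCoeff (mapCoeff f (logOneAdd (a - 1))) = 0 := by
    rw [constantCoeff_mapCoeff, constantCoeff_logOneAdd, map_zero]
  have hc2 : constantCoeff (substS (mapCoeff f (logOneAdd (a - 1)))) = 0 := by
    rw [constantCoeff_substS, hcM]
  rw [charFun, h2, expPS_add hc1 hc2, expPS_nsmul n (constantCoeff_logOneAdd 1),
    expPS_logOneAdd_one, ← substS_expPS hcM]
  rfl

lemma coeff_one_add_X_pow {R : Type*} [CommRing R] (m : ℕ) :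
    PowerSeries.coeff m (((1 : R⟦X⟧) + X) ^ m) = 1 := by
  have hpoly : (((1 + Polynomial.X : Polynomial R) : R⟦X⟧)) = 1 + X := by
    rw [Polynomial.coe_add, Polynomial.coe_one, Polynomial.coe_X]
  rw [← hpoly, ← Polynomial.coe_pow, Polynomial.coeff_coe]
  nontriviality R
  have h : (1 + Polynomial.X : Polynomial R) = Polynomial.X + Polynomial.C 1 := by
    simp [add_comm]
  rw [h]
  have hm := (Polynomial.monic_X_add_C (1 : R)).pow m
  have hd : ((Polynomial.X + Polynomial.C 1 : Polynomial R) ^ m).natDegree = m := by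
    rw [(Polynomial.monic_X_add_C (1 : R)).natDegree_pow, Polynomial.natDegree_X_add_C, mul_one]
  have hc := hm.coeff_natDegree
  rwa [hd] at hc

end QAlgebra

end Stmt9Aux

/-- for an `n`-homomorphism `f`, the `f`-Berezinian
`ber_f(a) = Σ_{k=0}^{n} ψ_k(f, a−1)` equals `ψ_n(f,a)`. -/
theorem stmt9 {A B : Type*} [CommRing A] [CommRing B] [Algebra ℚ A] [Algebra ℚ B]
    (f : A →ₗ[ℚ] B) (n : ℕ) (hf : IsNHom f n) (a : A) :
    ∑ k ∈ Finset.range (n + 1), psi f (a - 1) k = psi f a n := by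
  open Stmt9Aux in
  obtain ⟨hf1, hf2⟩ := hf
  have key := Stmt9Aux.charFun_eq f hf1 a
  set Q := charFun f (a - 1) with hQdef
  have hQ : ∀ j, n + 1 ≤ j → PowerSeries.coeff j Q = 0 := fun j hj => hf2 j hj (a - 1)
  have hsub : Stmt9Aux.substS Q = Polynomial.aeval (Stmt9Aux.sS B) (trunc (n + 1) Q) := by
    ext k
    rw [Stmt9Aux.substS, coeff_mk, Stmt9Aux.coeff_aeval_sS]
    refine Finset.sum_congr rfl fun j hj => ?_
    congr 1
    rw [coeff_trunc]
    split_ifs with h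
    · rfl
    · exact hQ j (by omega)
  have hpsi : psi f a n = PowerSeries.coeff n (charFun f a) := rfl
  rw [hpsi, key, hsub,
    Polynomial.aeval_eq_sum_range' (natDegree_trunc_lt Q n) (Stmt9Aux.sS B),
    Finset.mul_sum, map_sum]
  refine (Finset.sum_congr rfl fun j hj => ?_).symm
  simp only [Finset.mem_range] at hj
  rw [mul_smul_comm, LinearMap.map_smul, smul_eq_mul]
  have hcoeff : (trunc (n + 1) Q).coeff j = psi f (a - 1) j := by
    rw [coeff_trunc, if_pos (by omega)]
    rfl
  have hsplit : ((1 : B⟦X⟧) + X) ^ n * Stmt9Aux.sS B ^ j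
      = ((1 : B⟦X⟧) + X) ^ (n - j) * X ^ j := by
    have hnj : ((1 : B⟦X⟧) + X) ^ n = ((1 : B⟦X⟧) + X) ^ (n - j) * ((1 : B⟦X⟧) + X) ^ j := by
      rw [← pow_add]
      congr 1
      omega
    have hsx : (Stmt9Aux.sS B * ((1 : B⟦X⟧) + X)) ^ j = X ^ j := by
      rw [Stmt9Aux.sS_mul_one_add_X]
    rw [hnj, ← hsx, mul_pow]
    ring
  rw [hcoeff, hsplit, PowerSeries.coeff_mul_X_pow', if_pos (by omega : j ≤ n)]
  rw [show n - j = n - j from rfl, Stmt9Aux.coeff_one_add_X_pow (n - j), mul_one]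
end

section
/- If f : A → B is an n-homomorphism and g : A → B is an m-homomorphism, then the ℚ-linear map f + g is an (n+m)-homomorphism. -/
open PowerSeries

section Aux

variable {B : Type*} [CommRing B] [Algebra ℚ B]

omit [Algebra ℚ B] in
lemma aux_coeff_pow (p : PowerSeries B) (hp : constantCoeff p = 0)
    {k i : ℕ} (h : k < i) : PowerSeries.coeff k (p ^ i) = 0 := by
  have hd : (X : PowerSeries B) ^ i ∣ p ^ i :=
    pow_dvd_pow_of_dvd (X_dvd_iff.mpr hp) i
  exact X_pow_dvd_iff.mp hd k h

omit [Algebra ℚ B] in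
lemma aux_coeff_pow_mul (p q : PowerSeries B) (hp : constantCoeff p = 0)
    (hq : constantCoeff q = 0) {k i j : ℕ} (h : k < i + j) :
    PowerSeries.coeff k (p ^ i * q ^ j) = 0 := by
  have hd : (X : PowerSeries B) ^ (i + j) ∣ p ^ i * q ^ j := by
    rw [pow_add]
    exact mul_dvd_mul (pow_dvd_pow_of_dvd (X_dvd_iff.mpr hp) i)
      (pow_dvd_pow_of_dvd (X_dvd_iff.mpr hq) j)
  exact X_pow_dvd_iff.mp hd k h

lemma coeff_expPS_ext (p : PowerSeries B) (hp : constantCoeff p = 0)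
    {u k : ℕ} (huk : u ≤ k) :
    PowerSeries.coeff u (expPS p)
      = ∑ i ∈ Finset.range (k + 1), ((i.factorial : ℚ)⁻¹) • PowerSeries.coeff u (p ^ i) := by
  rw [expPS, coeff_mk]
  refine Finset.sum_subset (Finset.range_subset_range.mpr (by omega)) ?_
  intro i hi hni
  rw [aux_coeff_pow p hp (by simp only [Finset.mem_range] at hni ⊢; omega), smul_zero]

lemma expPS_add (p q : PowerSeries B) (hp : constantCoeff p = 0)
    (hq : constantCoeff q = 0) : expPS (p + q) = expPS p * expPS q := by
  ext k
  set c : ℕ → ℕ → B := fun i j =>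
    ((i.factorial * j.factorial : ℚ))⁻¹ • PowerSeries.coeff k (p ^ i * q ^ j) with hc
  have hzero : ∀ i j : ℕ, k < i + j → c i j = 0 := by
    intro i j h
    simp [hc, aux_coeff_pow_mul p q hp hq h]
  have hR : PowerSeries.coeff k (expPS p * expPS q)
      = ∑ i ∈ Finset.range (k + 1), ∑ j ∈ Finset.range (k + 1), c i j := by
    rw [coeff_mul]
    have h1 : ∀ uv ∈ Finset.HasAntidiagonal.antidiagonal k,
        PowerSeries.coeff uv.1 (expPS p) * PowerSeries.coeff uv.2 (expPS q)
          = ∑ i ∈ Finset.range (k + 1), ∑ j ∈ Finset.range (k + 1),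
              ((i.factorial * j.factorial : ℚ))⁻¹ •
                (PowerSeries.coeff uv.1 (p ^ i) * PowerSeries.coeff uv.2 (q ^ j)) := by
      intro uv huv
      have h := Finset.HasAntidiagonal.mem_antidiagonal.mp huv
      rw [coeff_expPS_ext p hp (k := k) (by omega), coeff_expPS_ext q hq (k := k) (by omega),
        Finset.sum_mul_sum]
      refine Finset.sum_congr rfl fun i _ => Finset.sum_congr rfl fun j _ => ?_
      rw [smul_mul_smul_comm, mul_inv]
    rw [Finset.sum_congr rfl h1, Finset.sum_comm]
    refine Finset.sum_congr rfl fun i _ => ?_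
    rw [Finset.sum_comm]
    refine Finset.sum_congr rfl fun j _ => ?_
    rw [← Finset.smul_sum, ← coeff_mul]
  have hL : PowerSeries.coeff k (expPS (p + q))
      = ∑ mm ∈ Finset.range (k + 1), ∑ i ∈ Finset.range (mm + 1), c i (mm - i) := by
    rw [expPS, coeff_mk]
    refine Finset.sum_congr rfl fun mm _ => ?_
    rw [add_pow, map_sum, Finset.smul_sum]
    refine Finset.sum_congr rfl fun i hi => ?_
    have hi' : i ≤ mm := by simpa using Nat.lt_succ_iff.mp (Finset.mem_range.mp hi)
    have h2 : PowerSeries.coeff k (p ^ i * q ^ (mm - i) * (mm.choose i : PowerSeries B))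
        = (mm.choose i : ℚ) • PowerSeries.coeff k (p ^ i * q ^ (mm - i)) := by
      rw [mul_comm, ← nsmul_eq_mul, map_nsmul, ← Nat.cast_smul_eq_nsmul ℚ]
    rw [h2, smul_smul, hc]
    congr 1
    rw [Nat.cast_choose ℚ hi']
    have h3 : (i.factorial : ℚ) ≠ 0 := Nat.cast_ne_zero.mpr i.factorial_ne_zero
    have h4 : ((mm - i).factorial : ℚ) ≠ 0 := Nat.cast_ne_zero.mpr (mm - i).factorial_ne_zero
    have h5 : (mm.factorial : ℚ) ≠ 0 := Nat.cast_ne_zero.mpr mm.factorial_ne_zero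
    field_simp
  have hshrink : ∀ i ∈ Finset.range (k + 1),
      ∑ j ∈ Finset.range (k + 1), c i j = ∑ j ∈ Finset.range (k + 1 - i), c i j := by
    intro i hi
    refine (Finset.sum_subset (Finset.range_subset_range.mpr (by omega)) ?_).symm
    intro j hj hj'
    simp only [Finset.mem_range] at hi hj hj'
    exact hzero i j (by omega)
  have tri : ∑ mm ∈ Finset.range (k + 1), ∑ i ∈ Finset.range (mm + 1), c i (mm - i)
      = ∑ i ∈ Finset.range (k + 1), ∑ j ∈ Finset.range (k + 1 - i), c i j := by
    rw [Finset.sum_sigma', Finset.sum_sigma']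
    refine Finset.sum_nbij' (fun x => ⟨x.2, x.1 - x.2⟩) (fun x => ⟨x.1 + x.2, x.1⟩)
      ?_ ?_ ?_ ?_ ?_
    · rintro ⟨mm, i⟩ hx
      simp only [Finset.mem_sigma, Finset.mem_range] at hx ⊢
      omega
    · rintro ⟨i, j⟩ hx
      simp only [Finset.mem_sigma, Finset.mem_range] at hx ⊢
      omega
    · rintro ⟨mm, i⟩ hx
      simp only [Finset.mem_sigma, Finset.mem_range] at hx
      simp only [Sigma.mk.inj_iff]
      constructor
      · omega
      · exact heq_of_eq rfl
    · rintro ⟨i, j⟩ hx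
      simp only [Finset.mem_sigma, Finset.mem_range] at hx
      simp only [Sigma.mk.inj_iff]
      refine ⟨by trivial, heq_of_eq (by omega)⟩
    · rintro ⟨mm, i⟩ hx
      rfl
  rw [hL, hR, tri, Finset.sum_congr rfl hshrink]

end Aux

section Aux2

variable {A B : Type*} [CommRing A] [CommRing B] [Algebra ℚ A] [Algebra ℚ B]

lemma constantCoeff_mapCoeff_logOneAdd (f : A →ₗ[ℚ] B) (a : A) :
    constantCoeff (mapCoeff f (logOneAdd a)) = 0 := by
  rw [← coeff_zero_eq_constantCoeff_apply, mapCoeff, coeff_mk, logOneAdd, coeff_mk]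
  simp

lemma charFun_add (f g : A →ₗ[ℚ] B) (a : A) :
    charFun (f + g) a = charFun f a * charFun g a := by
  have hm : mapCoeff (f + g) (logOneAdd a)
      = mapCoeff f (logOneAdd a) + mapCoeff g (logOneAdd a) := by
    ext k
    simp [mapCoeff]
  unfold charFun
  rw [hm, expPS_add _ _ (constantCoeff_mapCoeff_logOneAdd f a)
    (constantCoeff_mapCoeff_logOneAdd g a)]

lemma psi_add (f g : A →ₗ[ℚ] B) (a : A) (k : ℕ) :
    psi (f + g) a k = ∑ uv ∈ Finset.HasAntidiagonal.antidiagonal k, psi f a uv.1 * psi g a uv.2 := by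
  rw [psi, charFun_add, coeff_mul]
  rfl

end Aux2

/-- the sum of an `n`-homomorphism and an `m`-homomorphism is an
`(n+m)`-homomorphism. -/
theorem stmt11 {A B : Type*} [CommRing A] [CommRing B] [Algebra ℚ A] [Algebra ℚ B]
    (f g : A →ₗ[ℚ] B) (n m : ℕ) (hf : IsNHom f n) (hg : IsNHom g m) :
    IsNHom (f + g) (n + m) := by
  constructor
  · simp only [LinearMap.add_apply, hf.1, hg.1, add_nsmul]
  · intro k hk a
    rw [psi_add]
    refine Finset.sum_eq_zero fun uv huv => ?_
    have h := Finset.HasAntidiagonal.mem_antidiagonal.mp huv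
    rcases le_or_gt uv.1 n with h1 | h1
    · rw [hg.2 uv.2 (by omega) a, mul_zero]
    · rw [hf.2 uv.1 (by omega) a, zero_mul]
end

section
/- Let T^n(A) := A ⊗_ℚ ⋯ ⊗_ℚ A (n factors, i.e., the PiTensorProduct over Fin n of copies of A) with its commutative ℚ-algebra structure, and for i ∈ Fin n and a ∈ A let ι_i(a) ∈ T^n(A) denote the pure tensor with a in slot i and 1 in all other slots. Let F : T^n(A) → B be a ℚ-algebra homomorphism and define the ℚ-linear map f_F : A → B by f_F(a) = Σ_{i ∈ Fin n} F(ι_i(a)). Then the characteristic function of f_F is obtained by applying F coefficientwise to the product ∏_{i ∈ Fin n} (1 + ι_i(a)·T) ∈ T^n(A)[[T]]; that is, R(f_F, a) = Σ_{k=0}^{n} F(σ_k(a))·T^k, where σ_k(a) := Σ over k-element subsets S ⊆ Fin n of the pure tensor with a in the slots of S and 1 elsewhere. -/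
open PowerSeries

open scoped TensorProduct

/-- The pure tensor with `a` in slot `i` and `1` in all other slots, as a linear map. -/
noncomputable def iota {A : Type*} [CommRing A] [Algebra ℚ A] (n : ℕ) (i : Fin n) :
    A →ₗ[ℚ] (⨂[ℚ] (_ : Fin n), A) :=
  (PiTensorProduct.tprod ℚ (s := fun _ : Fin n => A)).toLinearMap (fun _ => 1) i

/-- The `n`-homomorphism `f_F(a) = Σ_i F(ι_i(a))` associated to an algebra
homomorphism `F : T^n(A) → B`. -/
noncomputable def fF {A B : Type*} [CommRing A] [CommRing B] [Algebra ℚ A] [Algebra ℚ B]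
    (n : ℕ) (F : (⨂[ℚ] (_ : Fin n), A) →ₐ[ℚ] B) : A →ₗ[ℚ] B :=
  ∑ i : Fin n, F.toLinearMap ∘ₗ iota n i

/-- `σ_k(a)`: the sum over `k`-element subsets `S ⊆ Fin n` of the pure tensor with
`a` in the slots of `S` and `1` elsewhere. -/
noncomputable def sigmaTensor {A : Type*} [CommRing A] [Algebra ℚ A] (n k : ℕ) (a : A) :
    ⨂[ℚ] (_ : Fin n), A :=
  ∑ S ∈ Finset.powersetCard k (Finset.univ : Finset (Fin n)),
    PiTensorProduct.tprod ℚ (fun i => if i ∈ S then a else 1)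

section Aux

set_option linter.unusedSectionVars false

variable {B : Type*} [CommRing B] [Algebra ℚ B]

lemma coeff_expPS (p : PowerSeries B) (k : ℕ) : coeff k (expPS p)
    = ∑ m ∈ Finset.range (k + 1), ((m.factorial : ℚ)⁻¹) • coeff k (p ^ m) :=
  PowerSeries.coeff_mk _ _

lemma coeff_pow_eq_zero {p : PowerSeries B} (hp : constantCoeff p = 0)
    {k m : ℕ} (h : k < m) : coeff k (p ^ m) = 0 := by
  have : (X : PowerSeries B) ^ m ∣ p ^ m := pow_dvd_pow_of_dvd (X_dvd_iff.2 hp) m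
  exact (X_pow_dvd_iff.1 this) k h

lemma constantCoeff_expPS (p : PowerSeries B) : constantCoeff (expPS p) = 1 := by
  simp [expPS, ← coeff_zero_eq_constantCoeff]

lemma derivative_expPS {p : PowerSeries B} (hp : constantCoeff p = 0) :
    d⁄dX B (expPS p) = d⁄dX B p * expPS p := by
  ext k
  rw [coeff_derivative, coeff_expPS]
  have hterm : ∀ m, ((m.factorial : ℚ)⁻¹ • coeff (k+1) (p ^ m)) * (k+1 : B)
      = (m.factorial : ℚ)⁻¹ • coeff k (d⁄dX B (p ^ m)) := by
    intro m
    rw [coeff_derivative, smul_mul_assoc]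
  rw [Finset.sum_mul]
  simp_rw [hterm]
  have hD : ∀ m : ℕ, d⁄dX B (p ^ (m+1)) = (m+1 : ℕ) • (p ^ m * d⁄dX B p) := by
    intro m
    rw [Derivation.leibniz_pow]
    simp [smul_smul, Nat.add_sub_cancel, mul_comm]
  rw [Finset.sum_range_succ']
  simp only [pow_zero, Derivation.map_one_eq_zero, map_zero, smul_zero, add_zero]
  have hL : ∀ m ∈ Finset.range (k+1),
      (((m+1).factorial : ℚ)⁻¹ • coeff k (d⁄dX B (p ^ (m+1))))
        = (m.factorial : ℚ)⁻¹ • coeff k (p ^ m * d⁄dX B p) := by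
    intro m _
    rw [hD, map_nsmul, ← Nat.cast_smul_eq_nsmul ℚ, smul_smul]
    congr 1
    have h2 : ((m.factorial : ℚ)) ≠ 0 := Nat.cast_ne_zero.2 m.factorial_ne_zero
    have h1 : ((m : ℚ) + 1) ≠ 0 := by positivity
    rw [Nat.factorial_succ]
    push_cast
    field_simp
  rw [Finset.sum_congr rfl hL]
  rw [PowerSeries.coeff_mul]
  have hext : ∀ x ∈ Finset.HasAntidiagonal.antidiagonal k,
      coeff x.1 (d⁄dX B p) * coeff x.2 (expPS p)
        = ∑ m ∈ Finset.range (k+1),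
            (m.factorial : ℚ)⁻¹ • (coeff x.1 (d⁄dX B p) * coeff x.2 (p ^ m)) := by
    intro x hx
    rw [coeff_expPS, Finset.mul_sum]
    simp_rw [mul_smul_comm]
    apply Finset.sum_subset
    · apply Finset.range_subset_range.2
      have := Finset.HasAntidiagonal.mem_antidiagonal.1 hx
      omega
    · intro m hm hnm
      have : x.2 < m := by
        simp only [Finset.mem_range] at hnm
        omega
      rw [coeff_pow_eq_zero hp this, mul_zero, smul_zero]
  rw [Finset.sum_congr rfl hext, Finset.sum_comm]
  apply Finset.sum_congr rfl
  intro m _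
  rw [← Finset.smul_sum, ← PowerSeries.coeff_mul, mul_comm (p ^ m)]

lemma mul_natCast_succ_smul (x : B) (k : ℕ) (q : ℚ) :
    (q • x) * ((k : B) + 1) = (((k : ℚ) + 1) * q) • x := by
  have h : ((k : B) + 1) = ((k + 1 : ℕ) : B) := by push_cast; ring
  rw [h, mul_comm, ← nsmul_eq_mul, ← Nat.cast_smul_eq_nsmul ℚ, smul_smul]
  congr 1
  push_cast; ring

lemma ode_unique {r y z : PowerSeries B} (hy : d⁄dX B y = r * y) (hz : d⁄dX B z = r * z)
    (h0 : constantCoeff y = constantCoeff z) : y = z := by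
  ext k
  induction k using Nat.strong_induction_on with
  | _ k ih =>
    match k with
    | 0 => simpa [coeff_zero_eq_constantCoeff] using h0
    | k + 1 =>
      have h1 : coeff k (d⁄dX B y) = coeff k (d⁄dX B z) := by
        rw [hy, hz, PowerSeries.coeff_mul, PowerSeries.coeff_mul]
        apply Finset.sum_congr rfl
        intro x hx
        have hx2 : x.2 < k + 1 := by
          have := Finset.HasAntidiagonal.mem_antidiagonal.1 hx; omega
        rw [ih x.2 hx2]
      rw [coeff_derivative, coeff_derivative] at h1
      have h2 : (((k : ℚ) + 1) * 1) • coeff (k+1) y = (((k : ℚ) + 1) * 1) • coeff (k+1) z := by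
        rw [← mul_natCast_succ_smul, ← mul_natCast_succ_smul, one_smul, one_smul]
        exact_mod_cast h1
      have hne : (((k : ℚ) + 1) * 1) ≠ 0 := by norm_num; positivity
      calc coeff (k+1) y = (((k:ℚ)+1)*1)⁻¹ • ((((k:ℚ)+1)*1) • coeff (k+1) y) := by
            rw [smul_smul, inv_mul_cancel₀ hne, one_smul]
        _ = (((k:ℚ)+1)*1)⁻¹ • ((((k:ℚ)+1)*1) • coeff (k+1) z) := by rw [h2]
        _ = coeff (k+1) z := by rw [smul_smul, inv_mul_cancel₀ hne, one_smul]

lemma constantCoeff_logOneAdd (c : B) : constantCoeff (logOneAdd c) = 0 := by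
  simp [logOneAdd, ← coeff_zero_eq_constantCoeff]

lemma coeff_derivative_logOneAdd (c : B) (k : ℕ) :
    coeff k (d⁄dX B (logOneAdd c)) = ((-1 : ℚ) ^ k) • c ^ (k + 1) := by
  rw [coeff_derivative, logOneAdd, coeff_mk, mul_natCast_succ_smul]
  congr 1
  have hne : ((k : ℚ) + 1) ≠ 0 := by positivity
  push_cast
  field_simp
  ring

lemma derivative_logOneAdd_mul (c : B) :
    d⁄dX B (logOneAdd c) * (1 + C c * X) = C c := by
  have hXform : d⁄dX B (logOneAdd c) * (1 + C c * X)
      = d⁄dX B (logOneAdd c) + (d⁄dX B (logOneAdd c) * C c) * X := by ring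
  rw [hXform]
  ext k
  match k with
  | 0 =>
    rw [map_add, coeff_zero_mul_X, add_zero, coeff_derivative_logOneAdd]
    simp
  | k + 1 =>
    rw [map_add, coeff_succ_mul_X, coeff_mul_C, coeff_derivative_logOneAdd,
      coeff_derivative_logOneAdd, coeff_C]
    simp only [Nat.succ_ne_zero, if_false, smul_mul_assoc, ← pow_succ]
    rw [pow_succ ((-1 : ℚ)) k]
    module

lemma derivative_prod_oneAdd {ι : Type*} [DecidableEq ι] (s : Finset ι) (c : ι → B) :
    d⁄dX B (∏ i ∈ s, (1 + C (c i) * X))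
      = (∑ i ∈ s, d⁄dX B (logOneAdd (c i))) * ∏ i ∈ s, (1 + C (c i) * X) := by
  induction s using Finset.induction_on with
  | empty => simp
  | insert a s hns ih =>
    rw [Finset.prod_insert hns, Finset.sum_insert hns, Derivation.leibniz, ih]
    have hda : d⁄dX B (1 + C (c a) * X) = C (c a) := by
      rw [map_add, Derivation.map_one_eq_zero, zero_add, Derivation.leibniz]
      simp [derivative_C, PowerSeries.derivative_X]
    rw [hda]
    have := derivative_logOneAdd_mul (c a)
    rw [smul_eq_mul, smul_eq_mul]
    linear_combination (-(∏ i ∈ s, (1 + C (c i) * X))) * this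

lemma expPS_sum_log {ι : Type*} [DecidableEq ι] (s : Finset ι) (c : ι → B) :
    expPS (∑ i ∈ s, logOneAdd (c i)) = ∏ i ∈ s, (1 + C (c i) * X) := by
  have hc0 : constantCoeff (∑ i ∈ s, logOneAdd (c i)) = 0 := by
    rw [map_sum]
    simp [constantCoeff_logOneAdd]
  apply ode_unique (r := ∑ i ∈ s, d⁄dX B (logOneAdd (c i)))
  · rw [derivative_expPS hc0, map_sum]
  · exact derivative_prod_oneAdd s c
  · rw [constantCoeff_expPS, map_prod]
    simp

lemma C_mul_X_pow (x : B) (k : ℕ) : C x * X ^ k = monomial k x := by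
  ext m
  rw [coeff_C_mul_X_pow, coeff_monomial]

lemma prod_one_add_eq {n : ℕ} (c : Fin n → B) :
    ∏ i : Fin n, (1 + C (c i) * X)
      = ∑ k ∈ Finset.range (n+1), monomial k
          (∑ S ∈ Finset.powersetCard k (Finset.univ : Finset (Fin n)), ∏ i ∈ S, c i) := by
  have h : ∀ i : Fin n, (1 : PowerSeries B) + C (c i) * X = C (c i) * X + 1 := fun i => by
    ring
  simp_rw [h]
  rw [Finset.prod_add, Finset.sum_powerset, Finset.card_univ, Fintype.card_fin]
  apply Finset.sum_congr rfl
  intro k hk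
  rw [map_sum]
  apply Finset.sum_congr rfl
  intro S hS
  have hcard : S.card = k := (Finset.mem_powersetCard.1 hS).2
  rw [Finset.prod_const, one_pow, mul_one, Finset.prod_mul_distrib, Finset.prod_const,
    ← map_prod C, hcard, C_mul_X_pow]

end Aux

section TensorAux

set_option linter.unusedSectionVars false

variable {A : Type*} [CommRing A] [Algebra ℚ A]

lemma iota_apply (n : ℕ) (i : Fin n) (a : A) :
    iota n i a = PiTensorProduct.tprod ℚ (Function.update (fun _ : Fin n => (1 : A)) i a) := rfl

lemma iota_pow (n : ℕ) (i : Fin n) (a : A) (k : ℕ) :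
    (iota n i a) ^ k = iota n i (a ^ k) := by
  induction k with
  | zero =>
    rw [pow_zero, iota_apply, pow_zero]
    have : Function.update (fun _ : Fin n => (1 : A)) i 1 = fun _ => 1 := by
      funext j; simp [Function.update_apply]
    rw [this]
    exact PiTensorProduct.one_def
  | succ k ih =>
    rw [pow_succ, ih, iota_apply, iota_apply, PiTensorProduct.tprod_mul_tprod]
    rw [iota_apply]
    congr 1
    funext j
    simp [Function.update_apply]
    split <;> simp [pow_succ]

lemma prod_iota (n : ℕ) (a : A) (S : Finset (Fin n)) :
    ∏ i ∈ S, iota n i a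
      = PiTensorProduct.tprod ℚ (fun j => if j ∈ S then a else (1 : A)) := by
  induction S using Finset.induction_on with
  | empty =>
    simp only [Finset.prod_empty, Finset.notMem_empty, if_false]
    exact PiTensorProduct.one_def
  | insert b S hns ih =>
    rw [Finset.prod_insert hns, ih, iota_apply, PiTensorProduct.tprod_mul_tprod]
    congr 1
    funext j
    by_cases hj : j = b
    · subst hj
      simp [Function.update_self, hns]
    · simp [Function.update_apply, hj, Finset.mem_insert]

lemma mapCoeff_algHom {B : Type*} [CommRing B] [Algebra ℚ B] (F : A →ₐ[ℚ] B)
    (p : PowerSeries A) :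
    mapCoeff F.toLinearMap p = PowerSeries.map (F : A →+* B) p := by
  ext k
  simp [mapCoeff, PowerSeries.coeff_map]

end TensorAux

/-- the characteristic function of `f_F` is obtained by applying `F`
coefficientwise to `∏_{i} (1 + ι_i(a)·T)`, i.e. `R(f_F,a) = Σ_{k=0}^{n} F(σ_k(a))·T^k`. -/
theorem stmt13 {A B : Type*} [CommRing A] [CommRing B] [Algebra ℚ A] [Algebra ℚ B]
    (n : ℕ) (F : (⨂[ℚ] (_ : Fin n), A) →ₐ[ℚ] B) (a : A) :
    charFun (fF n F) a =
      mapCoeff F.toLinearMap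
        (∏ i : Fin n,
          (1 + PowerSeries.C (iota n i a) * PowerSeries.X)) ∧
    charFun (fF n F) a =
      ∑ k ∈ Finset.range (n + 1), PowerSeries.monomial k (F (sigmaTensor n k a)) := by
  have step1 : mapCoeff (fF n F) (logOneAdd a)
      = ∑ i : Fin n, logOneAdd (F (iota n i a)) := by
    ext k
    rw [mapCoeff, PowerSeries.coeff_mk, logOneAdd, PowerSeries.coeff_mk, map_smul, fF,
      LinearMap.sum_apply, map_sum, Finset.smul_sum]
    apply Finset.sum_congr rfl
    intro i _
    rw [LinearMap.comp_apply, ← iota_pow]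
    simp only [AlgHom.toLinearMap_apply, map_pow, logOneAdd, PowerSeries.coeff_mk]
  have key : charFun (fF n F) a = ∏ i : Fin n, (1 + PowerSeries.C (F (iota n i a)) * X) := by
    rw [charFun, step1, expPS_sum_log]
  constructor
  · rw [key, mapCoeff_algHom, map_prod]
    apply Finset.prod_congr rfl
    intro i _
    simp [PowerSeries.map_C, PowerSeries.map_X]
  · rw [key, prod_one_add_eq]
    apply Finset.sum_congr rfl
    intro k _
    congr 1
    rw [sigmaTensor, map_sum]
    apply Finset.sum_congr rfl
    intro S _
    rw [← prod_iota, map_prod]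
end

section
/- Let f : A → B be an n-homomorphism with n ≥ 1, and let Φ_n : A^n → B be given by the Frobenius recursion Φ_1(a) = f(a), Φ_{k+1}(a_1,…,a_{k+1}) = f(a_{k+1})Φ_k(a_1,…,a_k) − Σ_{i=1}^{k} Φ_k(a_1,…,a_i a_{k+1},…,a_k). Then for every a ∈ A, Φ_n(a, 1, 1, …, 1) = (n−1)!·f(a). (This expresses that the n-homomorphism recovered from the algebra homomorphism F_f associated to f is f itself.) -/
open PowerSeries

/-- for an `n`-homomorphism `f` with `n ≥ 1` and `Φ_n` given by the
Frobenius recursion (implemented by `frob`), one has `Φ_n(a,1,…,1) = (n−1)!·f(a)`. -/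
theorem stmt16 {A B : Type*} [CommRing A] [CommRing B] [Algebra ℚ A] [Algebra ℚ B]
    (f : A →ₗ[ℚ] B) (n : ℕ) (hn : 1 ≤ n) (hf : IsNHom f n) (a : A) :
    frob f n (Function.update (fun _ : Fin n => (1 : A)) ⟨0, hn⟩ a) =
      ((n - 1).factorial : ℚ) • f a := by
  have key : ∀ k, ∀ hk : 1 ≤ k, k ≤ n →
      frob f k (Function.update (fun _ : Fin k => (1 : A)) ⟨0, hk⟩ a) =
        (∏ j ∈ Finset.range (k - 1), ((n : ℚ) - (j + 1))) • f a := by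
    intro k
    induction k with
    | zero => intro hk; omega
    | succ k ih =>
      intro hk hkn
      rcases Nat.eq_zero_or_pos k with hk0 | hk1
      · subst hk0
        show f _ * frob f 0 _ - _ = _
        simp [frob, Function.update_self, Fin.last]
      · have hwk : (fun i : Fin k =>
            (Function.update (fun _ : Fin (k+1) => (1 : A)) ⟨0, hk⟩ a) i.castSucc) =
            Function.update (fun _ : Fin k => (1 : A)) ⟨0, hk1⟩ a := by
          funext i
          rcases eq_or_ne i ⟨0, hk1⟩ with rfl | hi
          · have : (Fin.castSucc (⟨0, hk1⟩ : Fin k)) = (⟨0, hk⟩ : Fin (k+1)) := rfl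
            rw [this, Function.update_self, Function.update_self]
          · have h2 : (Fin.castSucc i) ≠ (⟨0, hk⟩ : Fin (k+1)) := by
              simp [Fin.ext_iff] at hi ⊢
              omega
            rw [Function.update_of_ne h2, Function.update_of_ne hi]
        have hlast : (Function.update (fun _ : Fin (k+1) => (1 : A)) ⟨0, hk⟩ a)
            (Fin.last k) = 1 := by
          apply Function.update_of_ne
          simp [Fin.ext_iff]; omega
        have hG := ih hk1 (by omega)
        show f _ * frob f k _ - _ = _
        rw [hlast]
        simp only [funext_iff.mp hwk]
        have hupd : ∀ i : Fin k,
            Function.update (Function.update (fun _ : Fin k => (1 : A)) ⟨0, hk1⟩ a) i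
              ((Function.update (fun _ : Fin k => (1 : A)) ⟨0, hk1⟩ a) i * 1) =
              Function.update (fun _ : Fin k => (1 : A)) ⟨0, hk1⟩ a := by
          intro i; rw [mul_one, Function.update_eq_self]
        have hsum : (∑ i : Fin k, frob f k
            (Function.update (Function.update (fun _ : Fin k => (1 : A)) ⟨0, hk1⟩ a) i
              ((Function.update (fun _ : Fin k => (1 : A)) ⟨0, hk1⟩ a) i * 1))) =
            (k : ℚ) • frob f k (Function.update (fun _ : Fin k => (1 : A)) ⟨0, hk1⟩ a) := by
          simp only [hupd]
          rw [Finset.sum_const, Finset.card_univ, Fintype.card_fin]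
          rw [← Nat.cast_smul_eq_nsmul ℚ]
        rw [hsum, hG, hf.1]
        have hn1 : (n • (1 : B)) * ((∏ j ∈ Finset.range (k - 1), ((n : ℚ) - (j + 1))) • f a)
            = (n : ℚ) • ((∏ j ∈ Finset.range (k - 1), ((n : ℚ) - (j + 1))) • f a) := by
          rw [← Nat.cast_smul_eq_nsmul ℚ n (1 : B), smul_mul_assoc, one_mul]
        rw [hn1, ← sub_smul, smul_smul]
        have hk' : k + 1 - 1 = (k - 1) + 1 := by omega
        rw [hk', Finset.prod_range_succ]
        congr 1
        have : ((k - 1 : ℕ) : ℚ) + 1 = (k : ℚ) := by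
          have : ((k - 1 : ℕ) : ℚ) = (k : ℚ) - 1 := by
            rw [Nat.cast_sub hk1]; norm_num
          rw [this]; ring
        rw [this]; ring
  have := key n hn le_rfl
  rw [this]
  congr 1
  have hcast : ∀ j ∈ Finset.range (n - 1), ((n : ℚ) - (j + 1)) = ((n - 1 - j : ℕ) : ℚ) := by
    intro j hj
    rw [Finset.mem_range] at hj
    have : ((n - 1 - j : ℕ) : ℚ) = (n : ℚ) - 1 - j := by
      rw [Nat.cast_sub (by omega), Nat.cast_sub hn]; norm_num
    rw [this]; ring
  rw [Finset.prod_congr rfl hcast, ← Nat.cast_prod]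
  congr 1
  calc ∏ j ∈ Finset.range (n - 1), (n - 1 - j)
      = ∏ j ∈ Finset.range (n - 1), ((n - 1) - 1 - j + 1) := by
        apply Finset.prod_congr rfl; intro j hj
        rw [Finset.mem_range] at hj; omega
    _ = ∏ j ∈ Finset.range (n - 1), (j + 1) := Finset.prod_range_reflect (· + 1) (n - 1)
    _ = (n - 1).factorial := Finset.prod_range_add_one_eq_factorial (n - 1)
end
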